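/- arXiv:2209.10613 — 5 statements merged into one kernel-verified Lean document; each statement's English description precedes it below -/
import Mathlib

section
/- Let X be a 7×7 real matrix of type Λ²₇, i.e. X = u ⌟ φ for some u ∈ E. Then rank X = 0 or rank X = 6. -/
open scoped BigOperators RealInnerProductSpace Matrix

noncomputable section

/-- Euclidean 7-space. -/
abbrev E7 := EuclideanSpace ℝ (Fin 7)

/-- Kronecker delta. -/
def kd (i j : Fin 7) : ℝ := if i = j then 1 else 0

/-- The totally antisymmetric 3-array with value 1 at `(a,b,c)` (for distinct `a,b,c`). -/
def tripleForm (a b c i j k : Fin 7) : ℝ :=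
  kd i a * (kd j b * kd k c - kd j c * kd k b)
  - kd i b * (kd j a * kd k c - kd j c * kd k a)
  + kd i c * (kd j a * kd k b - kd j b * kd k a)

/-- The G₂ 3-form `φ` on `ℝ⁷` (indices 0-based: φ₁₂₃ = φ(0,1,2) etc.). -/
def phi7 (i j k : Fin 7) : ℝ :=
  tripleForm 0 1 2 i j k + tripleForm 0 3 4 i j k + tripleForm 1 3 5 i j k
  + tripleForm 2 3 6 i j k + tripleForm 1 4 6 i j k
  - tripleForm 2 4 5 i j k - tripleForm 0 5 6 i j k

/-- The totally antisymmetric 4-array with value 1 at `(a,b,c,d)` (for distinct `a,b,c,d`). -/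
def quadForm (a b c d i j k l : Fin 7) : ℝ :=
  Matrix.det !![kd i a, kd i b, kd i c, kd i d;
                kd j a, kd j b, kd j c, kd j d;
                kd k a, kd k b, kd k c, kd k d;
                kd l a, kd l b, kd l c, kd l d]

/-- The 4-form `ψ = ⋆φ` on `ℝ⁷` (indices 0-based). -/
def psi7 (i j k l : Fin 7) : ℝ :=
  quadForm 3 4 5 6 i j k l + quadForm 0 2 3 5 i j k l + quadForm 1 2 5 6 i j k l
  + quadForm 0 2 4 6 i j k l + quadForm 0 1 4 5 i j k l
  - quadForm 1 2 3 4 i j k l - quadForm 0 1 3 6 i j k l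

/-- The cross product on `ℝ⁷`: `(u × v)_k = Σ_{p,q} u_p v_q φ(p,q,k)`. -/
def crossE (u v : E7) : E7 := WithLp.toLp 2 (fun k => ∑ p, ∑ q, u p * v q * phi7 p q k)

/-- The matrix `u ⌟ φ`, with entries `(u ⌟ φ)(i,j) = Σ_p u_p φ(p,i,j)`. -/
def contractPhi (u : E7) : Matrix (Fin 7) (Fin 7) ℝ :=
  Matrix.of fun i j => ∑ p, u p * phi7 p i j

/-- The matrix `u ∧ v`, with entries `u_i v_j - u_j v_i`. -/
def wedgeM (u v : E7) : Matrix (Fin 7) (Fin 7) ℝ :=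
  Matrix.of fun i j => u i * v j - u j * v i

/-- The matrix `Ψ_{uv}`, with entries `Σ_{p,q} u_p v_q ψ(p,q,i,j)`. -/
def PsiM (u v : E7) : Matrix (Fin 7) (Fin 7) ℝ :=
  Matrix.of fun i j => ∑ p, ∑ q, u p * v q * psi7 p q i j

/-- Evaluation of a matrix as a bilinear form: `X(u,v) = Σ_{i,j} u_i v_j X(i,j)`. -/
def Xform (X : Matrix (Fin 7) (Fin 7) ℝ) (u v : E7) : ℝ := ∑ i, ∑ j, u i * v j * X i j

/-- `X.mulVec v` as a map `E7 → E7`. -/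
def mulVecE (X : Matrix (Fin 7) (Fin 7) ℝ) (v : E7) : E7 := WithLp.toLp 2 (fun i => ∑ j, X i j * v j)

/-- A skew-symmetric matrix is of type `Λ²₁₄` (i.e. lies in 𝔤₂). -/
def IsType14 (X : Matrix (Fin 7) (Fin 7) ℝ) : Prop :=
  ∀ i j k : Fin 7, ∑ p, (X i p * phi7 p j k + X j p * phi7 i p k + X k p * phi7 i j p) = 0

/-- A G₂-adapted frame: an orthonormal basis `e₁,…,e₇` with
`e₃ = e₁ × e₂`, `e₅ = e₁ × e₄`, `e₆ = e₂ × e₄`, `e₇ = e₃ × e₄` (0-based indices). -/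
def IsG2Frame (e : Fin 7 → E7) : Prop :=
  Orthonormal ℝ e ∧ e 2 = crossE (e 0) (e 1) ∧ e 4 = crossE (e 0) (e 3)
  ∧ e 5 = crossE (e 1) (e 3) ∧ e 6 = crossE (e 2) (e 3)

/-- An associative 3-plane: a 3-dimensional subspace closed under the cross product. -/
def IsAssociative (P : Submodule ℝ E7) : Prop :=
  Module.finrank ℝ P = 3 ∧ ∀ u ∈ P, ∀ v ∈ P, crossE u v ∈ P



private def tf2 (u : E7) (a b c : Fin 7) (i j : Fin 7) : ℝ :=
  u a * (kd i b * kd j c - kd i c * kd j b)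
  - u b * (kd i a * kd j c - kd i c * kd j a)
  + u c * (kd i a * kd j b - kd i b * kd j a)

set_option maxHeartbeats 1000000 in
private lemma contract_eq (u : E7) (i j : Fin 7) : contractPhi u i j =
    tf2 u 0 1 2 i j + tf2 u 0 3 4 i j + tf2 u 1 3 5 i j + tf2 u 2 3 6 i j
    + tf2 u 1 4 6 i j - tf2 u 2 4 5 i j - tf2 u 0 5 6 i j := by
  simp [contractPhi, phi7, tf2, tripleForm, Fin.sum_univ_seven, kd]
  ring

set_option maxHeartbeats 4000000 in
private lemma key7 (u : E7) :
    (contractPhi u) * (contractPhi u)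
      = Matrix.of (fun i j => u i * u j) - (∑ p, u p * u p) • 1 := by
  ext i j
  rw [Matrix.mul_apply]
  simp only [contract_eq, tf2, Matrix.sub_apply, Matrix.smul_apply, Matrix.of_apply,
    Matrix.one_apply, smul_eq_mul, Fin.sum_univ_seven]
  fin_cases i <;> fin_cases j <;> simp [kd] <;> ring

set_option maxHeartbeats 1000000 in
private lemma mulVec_self7 (u : E7) : (contractPhi u).mulVec u = 0 := by
  funext i
  simp only [Matrix.mulVec, dotProduct, contract_eq, tf2, Fin.sum_univ_seven,
    Pi.zero_apply]
  fin_cases i <;> simp [kd] <;> ring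

/-- An element of `Λ²₇` has rank 0 or 6. -/
theorem stmt5 (X : Matrix (Fin 7) (Fin 7) ℝ) (h : ∃ u : E7, X = contractPhi u) :
    X.rank = 0 ∨ X.rank = 6 := by
  obtain ⟨u, rfl⟩ := h
  by_cases hu : u = 0
  · left
    have : contractPhi u = 0 := by
      subst hu; ext i j; simp [contractPhi]
    rw [this, Matrix.rank_zero]
  · right
    set X := contractPhi u with hX
    set s : ℝ := ∑ p, u p * u p with hs
    have hupi : (u : Fin 7 → ℝ) ≠ 0 := by
      intro h0
      exact hu (by ext i; exact congrFun h0 i)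
    have hs0 : s ≠ 0 := by
      intro h0
      apply hupi
      funext p
      have hnn : ∀ q ∈ Finset.univ, (0:ℝ) ≤ u q * u q := fun q _ => mul_self_nonneg _
      have := (Finset.sum_eq_zero_iff_of_nonneg hnn).mp h0.symm.symm p (Finset.mem_univ p)
      · exact mul_self_eq_zero.mp this
    have hker : LinearMap.ker X.mulVecLin = Submodule.span ℝ {(u : Fin 7 → ℝ)} := by
      apply le_antisymm
      · intro v hv
        have hv' : X.mulVec v = 0 := hv
        have h2 : (X * X).mulVec v = 0 := by
          rw [← Matrix.mulVec_mulVec, hv', Matrix.mulVec_zero]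
        rw [key7 u] at h2
        have h3 : (Matrix.of fun i j => u i * u j).mulVec v - s • v = 0 := by
          rw [Matrix.sub_mulVec, Matrix.smul_mulVec, Matrix.one_mulVec] at h2
          exact h2
        have h4 : (Matrix.of fun i j => u i * u j).mulVec v
            = (∑ j, u j * v j) • (u : Fin 7 → ℝ) := by
          funext i
          simp only [Matrix.mulVec, dotProduct, Matrix.of_apply, Pi.smul_apply, PiLp.smul_apply,
            smul_eq_mul, Finset.sum_mul]
          exact Finset.sum_congr rfl fun j _ => by ring
        have h5 : v = (s⁻¹ * ∑ j, u j * v j) • (u : Fin 7 → ℝ) := by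
          have h6 : s • v = (∑ j, u j * v j) • (u : Fin 7 → ℝ) := by
            rw [← h4]; linear_combination (norm := module) -h3
          calc v = s⁻¹ • (s • v) := by rw [smul_smul, inv_mul_cancel₀ hs0, one_smul]
          _ = s⁻¹ • ((∑ j, u j * v j) • (u : Fin 7 → ℝ)) := by rw [h6]
          _ = (s⁻¹ * ∑ j, u j * v j) • (u : Fin 7 → ℝ) := by rw [smul_smul]
        rw [h5]
        exact Submodule.smul_mem _ _ (Submodule.mem_span_singleton_self _)
      · rw [Submodule.span_le, Set.singleton_subset_iff]
        exact mulVec_self7 u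
    have hrk : X.rank + Module.finrank ℝ (LinearMap.ker X.mulVecLin)
        = Module.finrank ℝ (Fin 7 → ℝ) :=
      LinearMap.finrank_range_add_finrank_ker X.mulVecLin
    have h8 : Module.finrank ℝ (Submodule.span ℝ ({(u : Fin 7 → ℝ)} : Set (Fin 7 → ℝ))) = 1 :=
      finrank_span_singleton hupi
    rw [hker, h8] at hrk
    have h7 : Module.finrank ℝ (Fin 7 → ℝ) = 7 := by simp
    omega

end
end

section
/- Let X be a skew-symmetric 7×7 real matrix. If rank X = 2, then X is not of type Λ²₇ and X is not of type Λ²₁₄. If rank X = 4, then X is not of type Λ²₇. -/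
open scoped BigOperators RealInnerProductSpace Matrix

noncomputable section

section PhiTable
@[simp] lemma phv_0_0_0 : phi7 0 0 0 = 0 := by simp [phi7, tripleForm, kd]
@[simp] lemma phv_0_0_1 : phi7 0 0 1 = 0 := by simp [phi7, tripleForm, kd]
@[simp] lemma phv_0_0_2 : phi7 0 0 2 = 0 := by simp [phi7, tripleForm, kd]
@[simp] lemma phv_0_0_3 : phi7 0 0 3 = 0 := by simp [phi7, tripleForm, kd]
@[simp] lemma phv_0_0_4 : phi7 0 0 4 = 0 := by simp [phi7, tripleForm, kd]
@[simp] lemma phv_0_0_5 : phi7 0 0 5 = 0 := by simp [phi7, tripleForm, kd]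
@[simp] lemma phv_0_0_6 : phi7 0 0 6 = 0 := by simp [phi7, tripleForm, kd]
@[simp] lemma phv_0_1_0 : phi7 0 1 0 = 0 := by simp [phi7, tripleForm, kd]
@[simp] lemma phv_0_1_1 : phi7 0 1 1 = 0 := by simp [phi7, tripleForm, kd]
@[simp] lemma phv_0_1_2 : phi7 0 1 2 = 1 := by simp [phi7, tripleForm, kd]
@[simp] lemma phv_0_1_3 : phi7 0 1 3 = 0 := by simp [phi7, tripleForm, kd]
@[simp] lemma phv_0_1_4 : phi7 0 1 4 = 0 := by simp [phi7, tripleForm, kd]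
@[simp] lemma phv_0_1_5 : phi7 0 1 5 = 0 := by simp [phi7, tripleForm, kd]
@[simp] lemma phv_0_1_6 : phi7 0 1 6 = 0 := by simp [phi7, tripleForm, kd]
@[simp] lemma phv_0_2_0 : phi7 0 2 0 = 0 := by simp [phi7, tripleForm, kd]
@[simp] lemma phv_0_2_1 : phi7 0 2 1 = -1 := by simp [phi7, tripleForm, kd]
@[simp] lemma phv_0_2_2 : phi7 0 2 2 = 0 := by simp [phi7, tripleForm, kd]
@[simp] lemma phv_0_2_3 : phi7 0 2 3 = 0 := by simp [phi7, tripleForm, kd]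
@[simp] lemma phv_0_2_4 : phi7 0 2 4 = 0 := by simp [phi7, tripleForm, kd]
@[simp] lemma phv_0_2_5 : phi7 0 2 5 = 0 := by simp [phi7, tripleForm, kd]
@[simp] lemma phv_0_2_6 : phi7 0 2 6 = 0 := by simp [phi7, tripleForm, kd]
@[simp] lemma phv_0_3_0 : phi7 0 3 0 = 0 := by simp [phi7, tripleForm, kd]
@[simp] lemma phv_0_3_1 : phi7 0 3 1 = 0 := by simp [phi7, tripleForm, kd]
@[simp] lemma phv_0_3_2 : phi7 0 3 2 = 0 := by simp [phi7, tripleForm, kd]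
@[simp] lemma phv_0_3_3 : phi7 0 3 3 = 0 := by simp [phi7, tripleForm, kd]
@[simp] lemma phv_0_3_4 : phi7 0 3 4 = 1 := by simp [phi7, tripleForm, kd]
@[simp] lemma phv_0_3_5 : phi7 0 3 5 = 0 := by simp [phi7, tripleForm, kd]
@[simp] lemma phv_0_3_6 : phi7 0 3 6 = 0 := by simp [phi7, tripleForm, kd]
@[simp] lemma phv_0_4_0 : phi7 0 4 0 = 0 := by simp [phi7, tripleForm, kd]
@[simp] lemma phv_0_4_1 : phi7 0 4 1 = 0 := by simp [phi7, tripleForm, kd]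
@[simp] lemma phv_0_4_2 : phi7 0 4 2 = 0 := by simp [phi7, tripleForm, kd]
@[simp] lemma phv_0_4_3 : phi7 0 4 3 = -1 := by simp [phi7, tripleForm, kd]
@[simp] lemma phv_0_4_4 : phi7 0 4 4 = 0 := by simp [phi7, tripleForm, kd]
@[simp] lemma phv_0_4_5 : phi7 0 4 5 = 0 := by simp [phi7, tripleForm, kd]
@[simp] lemma phv_0_4_6 : phi7 0 4 6 = 0 := by simp [phi7, tripleForm, kd]
@[simp] lemma phv_0_5_0 : phi7 0 5 0 = 0 := by simp [phi7, tripleForm, kd]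
@[simp] lemma phv_0_5_1 : phi7 0 5 1 = 0 := by simp [phi7, tripleForm, kd]
@[simp] lemma phv_0_5_2 : phi7 0 5 2 = 0 := by simp [phi7, tripleForm, kd]
@[simp] lemma phv_0_5_3 : phi7 0 5 3 = 0 := by simp [phi7, tripleForm, kd]
@[simp] lemma phv_0_5_4 : phi7 0 5 4 = 0 := by simp [phi7, tripleForm, kd]
@[simp] lemma phv_0_5_5 : phi7 0 5 5 = 0 := by simp [phi7, tripleForm, kd]
@[simp] lemma phv_0_5_6 : phi7 0 5 6 = -1 := by simp [phi7, tripleForm, kd]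
@[simp] lemma phv_0_6_0 : phi7 0 6 0 = 0 := by simp [phi7, tripleForm, kd]
@[simp] lemma phv_0_6_1 : phi7 0 6 1 = 0 := by simp [phi7, tripleForm, kd]
@[simp] lemma phv_0_6_2 : phi7 0 6 2 = 0 := by simp [phi7, tripleForm, kd]
@[simp] lemma phv_0_6_3 : phi7 0 6 3 = 0 := by simp [phi7, tripleForm, kd]
@[simp] lemma phv_0_6_4 : phi7 0 6 4 = 0 := by simp [phi7, tripleForm, kd]
@[simp] lemma phv_0_6_5 : phi7 0 6 5 = 1 := by simp [phi7, tripleForm, kd]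
@[simp] lemma phv_0_6_6 : phi7 0 6 6 = 0 := by simp [phi7, tripleForm, kd]
@[simp] lemma phv_1_0_0 : phi7 1 0 0 = 0 := by simp [phi7, tripleForm, kd]
@[simp] lemma phv_1_0_1 : phi7 1 0 1 = 0 := by simp [phi7, tripleForm, kd]
@[simp] lemma phv_1_0_2 : phi7 1 0 2 = -1 := by simp [phi7, tripleForm, kd]
@[simp] lemma phv_1_0_3 : phi7 1 0 3 = 0 := by simp [phi7, tripleForm, kd]
@[simp] lemma phv_1_0_4 : phi7 1 0 4 = 0 := by simp [phi7, tripleForm, kd]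
@[simp] lemma phv_1_0_5 : phi7 1 0 5 = 0 := by simp [phi7, tripleForm, kd]
@[simp] lemma phv_1_0_6 : phi7 1 0 6 = 0 := by simp [phi7, tripleForm, kd]
@[simp] lemma phv_1_1_0 : phi7 1 1 0 = 0 := by simp [phi7, tripleForm, kd]
@[simp] lemma phv_1_1_1 : phi7 1 1 1 = 0 := by simp [phi7, tripleForm, kd]
@[simp] lemma phv_1_1_2 : phi7 1 1 2 = 0 := by simp [phi7, tripleForm, kd]
@[simp] lemma phv_1_1_3 : phi7 1 1 3 = 0 := by simp [phi7, tripleForm, kd]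
@[simp] lemma phv_1_1_4 : phi7 1 1 4 = 0 := by simp [phi7, tripleForm, kd]
@[simp] lemma phv_1_1_5 : phi7 1 1 5 = 0 := by simp [phi7, tripleForm, kd]
@[simp] lemma phv_1_1_6 : phi7 1 1 6 = 0 := by simp [phi7, tripleForm, kd]
@[simp] lemma phv_1_2_0 : phi7 1 2 0 = 1 := by simp [phi7, tripleForm, kd]
@[simp] lemma phv_1_2_1 : phi7 1 2 1 = 0 := by simp [phi7, tripleForm, kd]
@[simp] lemma phv_1_2_2 : phi7 1 2 2 = 0 := by simp [phi7, tripleForm, kd]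
@[simp] lemma phv_1_2_3 : phi7 1 2 3 = 0 := by simp [phi7, tripleForm, kd]
@[simp] lemma phv_1_2_4 : phi7 1 2 4 = 0 := by simp [phi7, tripleForm, kd]
@[simp] lemma phv_1_2_5 : phi7 1 2 5 = 0 := by simp [phi7, tripleForm, kd]
@[simp] lemma phv_1_2_6 : phi7 1 2 6 = 0 := by simp [phi7, tripleForm, kd]
@[simp] lemma phv_1_3_0 : phi7 1 3 0 = 0 := by simp [phi7, tripleForm, kd]
@[simp] lemma phv_1_3_1 : phi7 1 3 1 = 0 := by simp [phi7, tripleForm, kd]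
@[simp] lemma phv_1_3_2 : phi7 1 3 2 = 0 := by simp [phi7, tripleForm, kd]
@[simp] lemma phv_1_3_3 : phi7 1 3 3 = 0 := by simp [phi7, tripleForm, kd]
@[simp] lemma phv_1_3_4 : phi7 1 3 4 = 0 := by simp [phi7, tripleForm, kd]
@[simp] lemma phv_1_3_5 : phi7 1 3 5 = 1 := by simp [phi7, tripleForm, kd]
@[simp] lemma phv_1_3_6 : phi7 1 3 6 = 0 := by simp [phi7, tripleForm, kd]
@[simp] lemma phv_1_4_0 : phi7 1 4 0 = 0 := by simp [phi7, tripleForm, kd]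
@[simp] lemma phv_1_4_1 : phi7 1 4 1 = 0 := by simp [phi7, tripleForm, kd]
@[simp] lemma phv_1_4_2 : phi7 1 4 2 = 0 := by simp [phi7, tripleForm, kd]
@[simp] lemma phv_1_4_3 : phi7 1 4 3 = 0 := by simp [phi7, tripleForm, kd]
@[simp] lemma phv_1_4_4 : phi7 1 4 4 = 0 := by simp [phi7, tripleForm, kd]
@[simp] lemma phv_1_4_5 : phi7 1 4 5 = 0 := by simp [phi7, tripleForm, kd]
@[simp] lemma phv_1_4_6 : phi7 1 4 6 = 1 := by simp [phi7, tripleForm, kd]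
@[simp] lemma phv_1_5_0 : phi7 1 5 0 = 0 := by simp [phi7, tripleForm, kd]
@[simp] lemma phv_1_5_1 : phi7 1 5 1 = 0 := by simp [phi7, tripleForm, kd]
@[simp] lemma phv_1_5_2 : phi7 1 5 2 = 0 := by simp [phi7, tripleForm, kd]
@[simp] lemma phv_1_5_3 : phi7 1 5 3 = -1 := by simp [phi7, tripleForm, kd]
@[simp] lemma phv_1_5_4 : phi7 1 5 4 = 0 := by simp [phi7, tripleForm, kd]
@[simp] lemma phv_1_5_5 : phi7 1 5 5 = 0 := by simp [phi7, tripleForm, kd]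
@[simp] lemma phv_1_5_6 : phi7 1 5 6 = 0 := by simp [phi7, tripleForm, kd]
@[simp] lemma phv_1_6_0 : phi7 1 6 0 = 0 := by simp [phi7, tripleForm, kd]
@[simp] lemma phv_1_6_1 : phi7 1 6 1 = 0 := by simp [phi7, tripleForm, kd]
@[simp] lemma phv_1_6_2 : phi7 1 6 2 = 0 := by simp [phi7, tripleForm, kd]
@[simp] lemma phv_1_6_3 : phi7 1 6 3 = 0 := by simp [phi7, tripleForm, kd]
@[simp] lemma phv_1_6_4 : phi7 1 6 4 = -1 := by simp [phi7, tripleForm, kd]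
@[simp] lemma phv_1_6_5 : phi7 1 6 5 = 0 := by simp [phi7, tripleForm, kd]
@[simp] lemma phv_1_6_6 : phi7 1 6 6 = 0 := by simp [phi7, tripleForm, kd]
@[simp] lemma phv_2_0_0 : phi7 2 0 0 = 0 := by simp [phi7, tripleForm, kd]
@[simp] lemma phv_2_0_1 : phi7 2 0 1 = 1 := by simp [phi7, tripleForm, kd]
@[simp] lemma phv_2_0_2 : phi7 2 0 2 = 0 := by simp [phi7, tripleForm, kd]
@[simp] lemma phv_2_0_3 : phi7 2 0 3 = 0 := by simp [phi7, tripleForm, kd]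
@[simp] lemma phv_2_0_4 : phi7 2 0 4 = 0 := by simp [phi7, tripleForm, kd]
@[simp] lemma phv_2_0_5 : phi7 2 0 5 = 0 := by simp [phi7, tripleForm, kd]
@[simp] lemma phv_2_0_6 : phi7 2 0 6 = 0 := by simp [phi7, tripleForm, kd]
@[simp] lemma phv_2_1_0 : phi7 2 1 0 = -1 := by simp [phi7, tripleForm, kd]
@[simp] lemma phv_2_1_1 : phi7 2 1 1 = 0 := by simp [phi7, tripleForm, kd]
@[simp] lemma phv_2_1_2 : phi7 2 1 2 = 0 := by simp [phi7, tripleForm, kd]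
@[simp] lemma phv_2_1_3 : phi7 2 1 3 = 0 := by simp [phi7, tripleForm, kd]
@[simp] lemma phv_2_1_4 : phi7 2 1 4 = 0 := by simp [phi7, tripleForm, kd]
@[simp] lemma phv_2_1_5 : phi7 2 1 5 = 0 := by simp [phi7, tripleForm, kd]
@[simp] lemma phv_2_1_6 : phi7 2 1 6 = 0 := by simp [phi7, tripleForm, kd]
@[simp] lemma phv_2_2_0 : phi7 2 2 0 = 0 := by simp [phi7, tripleForm, kd]
@[simp] lemma phv_2_2_1 : phi7 2 2 1 = 0 := by simp [phi7, tripleForm, kd]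
@[simp] lemma phv_2_2_2 : phi7 2 2 2 = 0 := by simp [phi7, tripleForm, kd]
@[simp] lemma phv_2_2_3 : phi7 2 2 3 = 0 := by simp [phi7, tripleForm, kd]
@[simp] lemma phv_2_2_4 : phi7 2 2 4 = 0 := by simp [phi7, tripleForm, kd]
@[simp] lemma phv_2_2_5 : phi7 2 2 5 = 0 := by simp [phi7, tripleForm, kd]
@[simp] lemma phv_2_2_6 : phi7 2 2 6 = 0 := by simp [phi7, tripleForm, kd]
@[simp] lemma phv_2_3_0 : phi7 2 3 0 = 0 := by simp [phi7, tripleForm, kd]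
@[simp] lemma phv_2_3_1 : phi7 2 3 1 = 0 := by simp [phi7, tripleForm, kd]
@[simp] lemma phv_2_3_2 : phi7 2 3 2 = 0 := by simp [phi7, tripleForm, kd]
@[simp] lemma phv_2_3_3 : phi7 2 3 3 = 0 := by simp [phi7, tripleForm, kd]
@[simp] lemma phv_2_3_4 : phi7 2 3 4 = 0 := by simp [phi7, tripleForm, kd]
@[simp] lemma phv_2_3_5 : phi7 2 3 5 = 0 := by simp [phi7, tripleForm, kd]
@[simp] lemma phv_2_3_6 : phi7 2 3 6 = 1 := by simp [phi7, tripleForm, kd]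
@[simp] lemma phv_2_4_0 : phi7 2 4 0 = 0 := by simp [phi7, tripleForm, kd]
@[simp] lemma phv_2_4_1 : phi7 2 4 1 = 0 := by simp [phi7, tripleForm, kd]
@[simp] lemma phv_2_4_2 : phi7 2 4 2 = 0 := by simp [phi7, tripleForm, kd]
@[simp] lemma phv_2_4_3 : phi7 2 4 3 = 0 := by simp [phi7, tripleForm, kd]
@[simp] lemma phv_2_4_4 : phi7 2 4 4 = 0 := by simp [phi7, tripleForm, kd]
@[simp] lemma phv_2_4_5 : phi7 2 4 5 = -1 := by simp [phi7, tripleForm, kd]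
@[simp] lemma phv_2_4_6 : phi7 2 4 6 = 0 := by simp [phi7, tripleForm, kd]
@[simp] lemma phv_2_5_0 : phi7 2 5 0 = 0 := by simp [phi7, tripleForm, kd]
@[simp] lemma phv_2_5_1 : phi7 2 5 1 = 0 := by simp [phi7, tripleForm, kd]
@[simp] lemma phv_2_5_2 : phi7 2 5 2 = 0 := by simp [phi7, tripleForm, kd]
@[simp] lemma phv_2_5_3 : phi7 2 5 3 = 0 := by simp [phi7, tripleForm, kd]
@[simp] lemma phv_2_5_4 : phi7 2 5 4 = 1 := by simp [phi7, tripleForm, kd]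
@[simp] lemma phv_2_5_5 : phi7 2 5 5 = 0 := by simp [phi7, tripleForm, kd]
@[simp] lemma phv_2_5_6 : phi7 2 5 6 = 0 := by simp [phi7, tripleForm, kd]
@[simp] lemma phv_2_6_0 : phi7 2 6 0 = 0 := by simp [phi7, tripleForm, kd]
@[simp] lemma phv_2_6_1 : phi7 2 6 1 = 0 := by simp [phi7, tripleForm, kd]
@[simp] lemma phv_2_6_2 : phi7 2 6 2 = 0 := by simp [phi7, tripleForm, kd]
@[simp] lemma phv_2_6_3 : phi7 2 6 3 = -1 := by simp [phi7, tripleForm, kd]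
@[simp] lemma phv_2_6_4 : phi7 2 6 4 = 0 := by simp [phi7, tripleForm, kd]
@[simp] lemma phv_2_6_5 : phi7 2 6 5 = 0 := by simp [phi7, tripleForm, kd]
@[simp] lemma phv_2_6_6 : phi7 2 6 6 = 0 := by simp [phi7, tripleForm, kd]
@[simp] lemma phv_3_0_0 : phi7 3 0 0 = 0 := by simp [phi7, tripleForm, kd]
@[simp] lemma phv_3_0_1 : phi7 3 0 1 = 0 := by simp [phi7, tripleForm, kd]
@[simp] lemma phv_3_0_2 : phi7 3 0 2 = 0 := by simp [phi7, tripleForm, kd]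
@[simp] lemma phv_3_0_3 : phi7 3 0 3 = 0 := by simp [phi7, tripleForm, kd]
@[simp] lemma phv_3_0_4 : phi7 3 0 4 = -1 := by simp [phi7, tripleForm, kd]
@[simp] lemma phv_3_0_5 : phi7 3 0 5 = 0 := by simp [phi7, tripleForm, kd]
@[simp] lemma phv_3_0_6 : phi7 3 0 6 = 0 := by simp [phi7, tripleForm, kd]
@[simp] lemma phv_3_1_0 : phi7 3 1 0 = 0 := by simp [phi7, tripleForm, kd]
@[simp] lemma phv_3_1_1 : phi7 3 1 1 = 0 := by simp [phi7, tripleForm, kd]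
@[simp] lemma phv_3_1_2 : phi7 3 1 2 = 0 := by simp [phi7, tripleForm, kd]
@[simp] lemma phv_3_1_3 : phi7 3 1 3 = 0 := by simp [phi7, tripleForm, kd]
@[simp] lemma phv_3_1_4 : phi7 3 1 4 = 0 := by simp [phi7, tripleForm, kd]
@[simp] lemma phv_3_1_5 : phi7 3 1 5 = -1 := by simp [phi7, tripleForm, kd]
@[simp] lemma phv_3_1_6 : phi7 3 1 6 = 0 := by simp [phi7, tripleForm, kd]
@[simp] lemma phv_3_2_0 : phi7 3 2 0 = 0 := by simp [phi7, tripleForm, kd]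
@[simp] lemma phv_3_2_1 : phi7 3 2 1 = 0 := by simp [phi7, tripleForm, kd]
@[simp] lemma phv_3_2_2 : phi7 3 2 2 = 0 := by simp [phi7, tripleForm, kd]
@[simp] lemma phv_3_2_3 : phi7 3 2 3 = 0 := by simp [phi7, tripleForm, kd]
@[simp] lemma phv_3_2_4 : phi7 3 2 4 = 0 := by simp [phi7, tripleForm, kd]
@[simp] lemma phv_3_2_5 : phi7 3 2 5 = 0 := by simp [phi7, tripleForm, kd]
@[simp] lemma phv_3_2_6 : phi7 3 2 6 = -1 := by simp [phi7, tripleForm, kd]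
@[simp] lemma phv_3_3_0 : phi7 3 3 0 = 0 := by simp [phi7, tripleForm, kd]
@[simp] lemma phv_3_3_1 : phi7 3 3 1 = 0 := by simp [phi7, tripleForm, kd]
@[simp] lemma phv_3_3_2 : phi7 3 3 2 = 0 := by simp [phi7, tripleForm, kd]
@[simp] lemma phv_3_3_3 : phi7 3 3 3 = 0 := by simp [phi7, tripleForm, kd]
@[simp] lemma phv_3_3_4 : phi7 3 3 4 = 0 := by simp [phi7, tripleForm, kd]
@[simp] lemma phv_3_3_5 : phi7 3 3 5 = 0 := by simp [phi7, tripleForm, kd]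
@[simp] lemma phv_3_3_6 : phi7 3 3 6 = 0 := by simp [phi7, tripleForm, kd]
@[simp] lemma phv_3_4_0 : phi7 3 4 0 = 1 := by simp [phi7, tripleForm, kd]
@[simp] lemma phv_3_4_1 : phi7 3 4 1 = 0 := by simp [phi7, tripleForm, kd]
@[simp] lemma phv_3_4_2 : phi7 3 4 2 = 0 := by simp [phi7, tripleForm, kd]
@[simp] lemma phv_3_4_3 : phi7 3 4 3 = 0 := by simp [phi7, tripleForm, kd]
@[simp] lemma phv_3_4_4 : phi7 3 4 4 = 0 := by simp [phi7, tripleForm, kd]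
@[simp] lemma phv_3_4_5 : phi7 3 4 5 = 0 := by simp [phi7, tripleForm, kd]
@[simp] lemma phv_3_4_6 : phi7 3 4 6 = 0 := by simp [phi7, tripleForm, kd]
@[simp] lemma phv_3_5_0 : phi7 3 5 0 = 0 := by simp [phi7, tripleForm, kd]
@[simp] lemma phv_3_5_1 : phi7 3 5 1 = 1 := by simp [phi7, tripleForm, kd]
@[simp] lemma phv_3_5_2 : phi7 3 5 2 = 0 := by simp [phi7, tripleForm, kd]
@[simp] lemma phv_3_5_3 : phi7 3 5 3 = 0 := by simp [phi7, tripleForm, kd]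
@[simp] lemma phv_3_5_4 : phi7 3 5 4 = 0 := by simp [phi7, tripleForm, kd]
@[simp] lemma phv_3_5_5 : phi7 3 5 5 = 0 := by simp [phi7, tripleForm, kd]
@[simp] lemma phv_3_5_6 : phi7 3 5 6 = 0 := by simp [phi7, tripleForm, kd]
@[simp] lemma phv_3_6_0 : phi7 3 6 0 = 0 := by simp [phi7, tripleForm, kd]
@[simp] lemma phv_3_6_1 : phi7 3 6 1 = 0 := by simp [phi7, tripleForm, kd]
@[simp] lemma phv_3_6_2 : phi7 3 6 2 = 1 := by simp [phi7, tripleForm, kd]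
@[simp] lemma phv_3_6_3 : phi7 3 6 3 = 0 := by simp [phi7, tripleForm, kd]
@[simp] lemma phv_3_6_4 : phi7 3 6 4 = 0 := by simp [phi7, tripleForm, kd]
@[simp] lemma phv_3_6_5 : phi7 3 6 5 = 0 := by simp [phi7, tripleForm, kd]
@[simp] lemma phv_3_6_6 : phi7 3 6 6 = 0 := by simp [phi7, tripleForm, kd]
@[simp] lemma phv_4_0_0 : phi7 4 0 0 = 0 := by simp [phi7, tripleForm, kd]
@[simp] lemma phv_4_0_1 : phi7 4 0 1 = 0 := by simp [phi7, tripleForm, kd]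
@[simp] lemma phv_4_0_2 : phi7 4 0 2 = 0 := by simp [phi7, tripleForm, kd]
@[simp] lemma phv_4_0_3 : phi7 4 0 3 = 1 := by simp [phi7, tripleForm, kd]
@[simp] lemma phv_4_0_4 : phi7 4 0 4 = 0 := by simp [phi7, tripleForm, kd]
@[simp] lemma phv_4_0_5 : phi7 4 0 5 = 0 := by simp [phi7, tripleForm, kd]
@[simp] lemma phv_4_0_6 : phi7 4 0 6 = 0 := by simp [phi7, tripleForm, kd]
@[simp] lemma phv_4_1_0 : phi7 4 1 0 = 0 := by simp [phi7, tripleForm, kd]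
@[simp] lemma phv_4_1_1 : phi7 4 1 1 = 0 := by simp [phi7, tripleForm, kd]
@[simp] lemma phv_4_1_2 : phi7 4 1 2 = 0 := by simp [phi7, tripleForm, kd]
@[simp] lemma phv_4_1_3 : phi7 4 1 3 = 0 := by simp [phi7, tripleForm, kd]
@[simp] lemma phv_4_1_4 : phi7 4 1 4 = 0 := by simp [phi7, tripleForm, kd]
@[simp] lemma phv_4_1_5 : phi7 4 1 5 = 0 := by simp [phi7, tripleForm, kd]
@[simp] lemma phv_4_1_6 : phi7 4 1 6 = -1 := by simp [phi7, tripleForm, kd]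
@[simp] lemma phv_4_2_0 : phi7 4 2 0 = 0 := by simp [phi7, tripleForm, kd]
@[simp] lemma phv_4_2_1 : phi7 4 2 1 = 0 := by simp [phi7, tripleForm, kd]
@[simp] lemma phv_4_2_2 : phi7 4 2 2 = 0 := by simp [phi7, tripleForm, kd]
@[simp] lemma phv_4_2_3 : phi7 4 2 3 = 0 := by simp [phi7, tripleForm, kd]
@[simp] lemma phv_4_2_4 : phi7 4 2 4 = 0 := by simp [phi7, tripleForm, kd]
@[simp] lemma phv_4_2_5 : phi7 4 2 5 = 1 := by simp [phi7, tripleForm, kd]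
@[simp] lemma phv_4_2_6 : phi7 4 2 6 = 0 := by simp [phi7, tripleForm, kd]
@[simp] lemma phv_4_3_0 : phi7 4 3 0 = -1 := by simp [phi7, tripleForm, kd]
@[simp] lemma phv_4_3_1 : phi7 4 3 1 = 0 := by simp [phi7, tripleForm, kd]
@[simp] lemma phv_4_3_2 : phi7 4 3 2 = 0 := by simp [phi7, tripleForm, kd]
@[simp] lemma phv_4_3_3 : phi7 4 3 3 = 0 := by simp [phi7, tripleForm, kd]
@[simp] lemma phv_4_3_4 : phi7 4 3 4 = 0 := by simp [phi7, tripleForm, kd]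
@[simp] lemma phv_4_3_5 : phi7 4 3 5 = 0 := by simp [phi7, tripleForm, kd]
@[simp] lemma phv_4_3_6 : phi7 4 3 6 = 0 := by simp [phi7, tripleForm, kd]
@[simp] lemma phv_4_4_0 : phi7 4 4 0 = 0 := by simp [phi7, tripleForm, kd]
@[simp] lemma phv_4_4_1 : phi7 4 4 1 = 0 := by simp [phi7, tripleForm, kd]
@[simp] lemma phv_4_4_2 : phi7 4 4 2 = 0 := by simp [phi7, tripleForm, kd]
@[simp] lemma phv_4_4_3 : phi7 4 4 3 = 0 := by simp [phi7, tripleForm, kd]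
@[simp] lemma phv_4_4_4 : phi7 4 4 4 = 0 := by simp [phi7, tripleForm, kd]
@[simp] lemma phv_4_4_5 : phi7 4 4 5 = 0 := by simp [phi7, tripleForm, kd]
@[simp] lemma phv_4_4_6 : phi7 4 4 6 = 0 := by simp [phi7, tripleForm, kd]
@[simp] lemma phv_4_5_0 : phi7 4 5 0 = 0 := by simp [phi7, tripleForm, kd]
@[simp] lemma phv_4_5_1 : phi7 4 5 1 = 0 := by simp [phi7, tripleForm, kd]
@[simp] lemma phv_4_5_2 : phi7 4 5 2 = -1 := by simp [phi7, tripleForm, kd]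
@[simp] lemma phv_4_5_3 : phi7 4 5 3 = 0 := by simp [phi7, tripleForm, kd]
@[simp] lemma phv_4_5_4 : phi7 4 5 4 = 0 := by simp [phi7, tripleForm, kd]
@[simp] lemma phv_4_5_5 : phi7 4 5 5 = 0 := by simp [phi7, tripleForm, kd]
@[simp] lemma phv_4_5_6 : phi7 4 5 6 = 0 := by simp [phi7, tripleForm, kd]
@[simp] lemma phv_4_6_0 : phi7 4 6 0 = 0 := by simp [phi7, tripleForm, kd]
@[simp] lemma phv_4_6_1 : phi7 4 6 1 = 1 := by simp [phi7, tripleForm, kd]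
@[simp] lemma phv_4_6_2 : phi7 4 6 2 = 0 := by simp [phi7, tripleForm, kd]
@[simp] lemma phv_4_6_3 : phi7 4 6 3 = 0 := by simp [phi7, tripleForm, kd]
@[simp] lemma phv_4_6_4 : phi7 4 6 4 = 0 := by simp [phi7, tripleForm, kd]
@[simp] lemma phv_4_6_5 : phi7 4 6 5 = 0 := by simp [phi7, tripleForm, kd]
@[simp] lemma phv_4_6_6 : phi7 4 6 6 = 0 := by simp [phi7, tripleForm, kd]
@[simp] lemma phv_5_0_0 : phi7 5 0 0 = 0 := by simp [phi7, tripleForm, kd]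
@[simp] lemma phv_5_0_1 : phi7 5 0 1 = 0 := by simp [phi7, tripleForm, kd]
@[simp] lemma phv_5_0_2 : phi7 5 0 2 = 0 := by simp [phi7, tripleForm, kd]
@[simp] lemma phv_5_0_3 : phi7 5 0 3 = 0 := by simp [phi7, tripleForm, kd]
@[simp] lemma phv_5_0_4 : phi7 5 0 4 = 0 := by simp [phi7, tripleForm, kd]
@[simp] lemma phv_5_0_5 : phi7 5 0 5 = 0 := by simp [phi7, tripleForm, kd]
@[simp] lemma phv_5_0_6 : phi7 5 0 6 = 1 := by simp [phi7, tripleForm, kd]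
@[simp] lemma phv_5_1_0 : phi7 5 1 0 = 0 := by simp [phi7, tripleForm, kd]
@[simp] lemma phv_5_1_1 : phi7 5 1 1 = 0 := by simp [phi7, tripleForm, kd]
@[simp] lemma phv_5_1_2 : phi7 5 1 2 = 0 := by simp [phi7, tripleForm, kd]
@[simp] lemma phv_5_1_3 : phi7 5 1 3 = 1 := by simp [phi7, tripleForm, kd]
@[simp] lemma phv_5_1_4 : phi7 5 1 4 = 0 := by simp [phi7, tripleForm, kd]
@[simp] lemma phv_5_1_5 : phi7 5 1 5 = 0 := by simp [phi7, tripleForm, kd]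
@[simp] lemma phv_5_1_6 : phi7 5 1 6 = 0 := by simp [phi7, tripleForm, kd]
@[simp] lemma phv_5_2_0 : phi7 5 2 0 = 0 := by simp [phi7, tripleForm, kd]
@[simp] lemma phv_5_2_1 : phi7 5 2 1 = 0 := by simp [phi7, tripleForm, kd]
@[simp] lemma phv_5_2_2 : phi7 5 2 2 = 0 := by simp [phi7, tripleForm, kd]
@[simp] lemma phv_5_2_3 : phi7 5 2 3 = 0 := by simp [phi7, tripleForm, kd]
@[simp] lemma phv_5_2_4 : phi7 5 2 4 = -1 := by simp [phi7, tripleForm, kd]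
@[simp] lemma phv_5_2_5 : phi7 5 2 5 = 0 := by simp [phi7, tripleForm, kd]
@[simp] lemma phv_5_2_6 : phi7 5 2 6 = 0 := by simp [phi7, tripleForm, kd]
@[simp] lemma phv_5_3_0 : phi7 5 3 0 = 0 := by simp [phi7, tripleForm, kd]
@[simp] lemma phv_5_3_1 : phi7 5 3 1 = -1 := by simp [phi7, tripleForm, kd]
@[simp] lemma phv_5_3_2 : phi7 5 3 2 = 0 := by simp [phi7, tripleForm, kd]
@[simp] lemma phv_5_3_3 : phi7 5 3 3 = 0 := by simp [phi7, tripleForm, kd]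
@[simp] lemma phv_5_3_4 : phi7 5 3 4 = 0 := by simp [phi7, tripleForm, kd]
@[simp] lemma phv_5_3_5 : phi7 5 3 5 = 0 := by simp [phi7, tripleForm, kd]
@[simp] lemma phv_5_3_6 : phi7 5 3 6 = 0 := by simp [phi7, tripleForm, kd]
@[simp] lemma phv_5_4_0 : phi7 5 4 0 = 0 := by simp [phi7, tripleForm, kd]
@[simp] lemma phv_5_4_1 : phi7 5 4 1 = 0 := by simp [phi7, tripleForm, kd]
@[simp] lemma phv_5_4_2 : phi7 5 4 2 = 1 := by simp [phi7, tripleForm, kd]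
@[simp] lemma phv_5_4_3 : phi7 5 4 3 = 0 := by simp [phi7, tripleForm, kd]
@[simp] lemma phv_5_4_4 : phi7 5 4 4 = 0 := by simp [phi7, tripleForm, kd]
@[simp] lemma phv_5_4_5 : phi7 5 4 5 = 0 := by simp [phi7, tripleForm, kd]
@[simp] lemma phv_5_4_6 : phi7 5 4 6 = 0 := by simp [phi7, tripleForm, kd]
@[simp] lemma phv_5_5_0 : phi7 5 5 0 = 0 := by simp [phi7, tripleForm, kd]
@[simp] lemma phv_5_5_1 : phi7 5 5 1 = 0 := by simp [phi7, tripleForm, kd]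
@[simp] lemma phv_5_5_2 : phi7 5 5 2 = 0 := by simp [phi7, tripleForm, kd]
@[simp] lemma phv_5_5_3 : phi7 5 5 3 = 0 := by simp [phi7, tripleForm, kd]
@[simp] lemma phv_5_5_4 : phi7 5 5 4 = 0 := by simp [phi7, tripleForm, kd]
@[simp] lemma phv_5_5_5 : phi7 5 5 5 = 0 := by simp [phi7, tripleForm, kd]
@[simp] lemma phv_5_5_6 : phi7 5 5 6 = 0 := by simp [phi7, tripleForm, kd]
@[simp] lemma phv_5_6_0 : phi7 5 6 0 = -1 := by simp [phi7, tripleForm, kd]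
@[simp] lemma phv_5_6_1 : phi7 5 6 1 = 0 := by simp [phi7, tripleForm, kd]
@[simp] lemma phv_5_6_2 : phi7 5 6 2 = 0 := by simp [phi7, tripleForm, kd]
@[simp] lemma phv_5_6_3 : phi7 5 6 3 = 0 := by simp [phi7, tripleForm, kd]
@[simp] lemma phv_5_6_4 : phi7 5 6 4 = 0 := by simp [phi7, tripleForm, kd]
@[simp] lemma phv_5_6_5 : phi7 5 6 5 = 0 := by simp [phi7, tripleForm, kd]
@[simp] lemma phv_5_6_6 : phi7 5 6 6 = 0 := by simp [phi7, tripleForm, kd]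
@[simp] lemma phv_6_0_0 : phi7 6 0 0 = 0 := by simp [phi7, tripleForm, kd]
@[simp] lemma phv_6_0_1 : phi7 6 0 1 = 0 := by simp [phi7, tripleForm, kd]
@[simp] lemma phv_6_0_2 : phi7 6 0 2 = 0 := by simp [phi7, tripleForm, kd]
@[simp] lemma phv_6_0_3 : phi7 6 0 3 = 0 := by simp [phi7, tripleForm, kd]
@[simp] lemma phv_6_0_4 : phi7 6 0 4 = 0 := by simp [phi7, tripleForm, kd]
@[simp] lemma phv_6_0_5 : phi7 6 0 5 = -1 := by simp [phi7, tripleForm, kd]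
@[simp] lemma phv_6_0_6 : phi7 6 0 6 = 0 := by simp [phi7, tripleForm, kd]
@[simp] lemma phv_6_1_0 : phi7 6 1 0 = 0 := by simp [phi7, tripleForm, kd]
@[simp] lemma phv_6_1_1 : phi7 6 1 1 = 0 := by simp [phi7, tripleForm, kd]
@[simp] lemma phv_6_1_2 : phi7 6 1 2 = 0 := by simp [phi7, tripleForm, kd]
@[simp] lemma phv_6_1_3 : phi7 6 1 3 = 0 := by simp [phi7, tripleForm, kd]
@[simp] lemma phv_6_1_4 : phi7 6 1 4 = 1 := by simp [phi7, tripleForm, kd]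
@[simp] lemma phv_6_1_5 : phi7 6 1 5 = 0 := by simp [phi7, tripleForm, kd]
@[simp] lemma phv_6_1_6 : phi7 6 1 6 = 0 := by simp [phi7, tripleForm, kd]
@[simp] lemma phv_6_2_0 : phi7 6 2 0 = 0 := by simp [phi7, tripleForm, kd]
@[simp] lemma phv_6_2_1 : phi7 6 2 1 = 0 := by simp [phi7, tripleForm, kd]
@[simp] lemma phv_6_2_2 : phi7 6 2 2 = 0 := by simp [phi7, tripleForm, kd]
@[simp] lemma phv_6_2_3 : phi7 6 2 3 = 1 := by simp [phi7, tripleForm, kd]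
@[simp] lemma phv_6_2_4 : phi7 6 2 4 = 0 := by simp [phi7, tripleForm, kd]
@[simp] lemma phv_6_2_5 : phi7 6 2 5 = 0 := by simp [phi7, tripleForm, kd]
@[simp] lemma phv_6_2_6 : phi7 6 2 6 = 0 := by simp [phi7, tripleForm, kd]
@[simp] lemma phv_6_3_0 : phi7 6 3 0 = 0 := by simp [phi7, tripleForm, kd]
@[simp] lemma phv_6_3_1 : phi7 6 3 1 = 0 := by simp [phi7, tripleForm, kd]
@[simp] lemma phv_6_3_2 : phi7 6 3 2 = -1 := by simp [phi7, tripleForm, kd]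
@[simp] lemma phv_6_3_3 : phi7 6 3 3 = 0 := by simp [phi7, tripleForm, kd]
@[simp] lemma phv_6_3_4 : phi7 6 3 4 = 0 := by simp [phi7, tripleForm, kd]
@[simp] lemma phv_6_3_5 : phi7 6 3 5 = 0 := by simp [phi7, tripleForm, kd]
@[simp] lemma phv_6_3_6 : phi7 6 3 6 = 0 := by simp [phi7, tripleForm, kd]
@[simp] lemma phv_6_4_0 : phi7 6 4 0 = 0 := by simp [phi7, tripleForm, kd]
@[simp] lemma phv_6_4_1 : phi7 6 4 1 = -1 := by simp [phi7, tripleForm, kd]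
@[simp] lemma phv_6_4_2 : phi7 6 4 2 = 0 := by simp [phi7, tripleForm, kd]
@[simp] lemma phv_6_4_3 : phi7 6 4 3 = 0 := by simp [phi7, tripleForm, kd]
@[simp] lemma phv_6_4_4 : phi7 6 4 4 = 0 := by simp [phi7, tripleForm, kd]
@[simp] lemma phv_6_4_5 : phi7 6 4 5 = 0 := by simp [phi7, tripleForm, kd]
@[simp] lemma phv_6_4_6 : phi7 6 4 6 = 0 := by simp [phi7, tripleForm, kd]
@[simp] lemma phv_6_5_0 : phi7 6 5 0 = 1 := by simp [phi7, tripleForm, kd]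
@[simp] lemma phv_6_5_1 : phi7 6 5 1 = 0 := by simp [phi7, tripleForm, kd]
@[simp] lemma phv_6_5_2 : phi7 6 5 2 = 0 := by simp [phi7, tripleForm, kd]
@[simp] lemma phv_6_5_3 : phi7 6 5 3 = 0 := by simp [phi7, tripleForm, kd]
@[simp] lemma phv_6_5_4 : phi7 6 5 4 = 0 := by simp [phi7, tripleForm, kd]
@[simp] lemma phv_6_5_5 : phi7 6 5 5 = 0 := by simp [phi7, tripleForm, kd]
@[simp] lemma phv_6_5_6 : phi7 6 5 6 = 0 := by simp [phi7, tripleForm, kd]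
@[simp] lemma phv_6_6_0 : phi7 6 6 0 = 0 := by simp [phi7, tripleForm, kd]
@[simp] lemma phv_6_6_1 : phi7 6 6 1 = 0 := by simp [phi7, tripleForm, kd]
@[simp] lemma phv_6_6_2 : phi7 6 6 2 = 0 := by simp [phi7, tripleForm, kd]
@[simp] lemma phv_6_6_3 : phi7 6 6 3 = 0 := by simp [phi7, tripleForm, kd]
@[simp] lemma phv_6_6_4 : phi7 6 6 4 = 0 := by simp [phi7, tripleForm, kd]
@[simp] lemma phv_6_6_5 : phi7 6 6 5 = 0 := by simp [phi7, tripleForm, kd]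
@[simp] lemma phv_6_6_6 : phi7 6 6 6 = 0 := by simp [phi7, tripleForm, kd]
end PhiTable

lemma det_skew4 (p q r s t w : ℝ) :
    Matrix.det !![0,p,q,r; -p,0,s,t; -q,-s,0,w; -r,-t,-w,0] = (p*w - q*t + r*s)^2 := by
  rw [Matrix.det_succ_row_zero]
  simp [Fin.sum_univ_succ, Matrix.det_fin_three, Fin.succAbove, Matrix.submatrix]
  ring

lemma rank_add_le' (A B : Matrix (Fin 7) (Fin 7) ℝ) : (A + B).rank ≤ A.rank + B.rank := by
  rw [Matrix.rank, Matrix.rank, Matrix.rank, Matrix.mulVecLin_add]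
  have h : LinearMap.range (A.mulVecLin + B.mulVecLin) ≤
      LinearMap.range A.mulVecLin ⊔ LinearMap.range B.mulVecLin := by
    rintro x ⟨y, rfl⟩
    exact Submodule.mem_sup.2 ⟨A.mulVecLin y, ⟨y, rfl⟩, B.mulVecLin y, ⟨y, rfl⟩, rfl⟩
  exact (Submodule.finrank_mono h).trans (Submodule.finrank_add_le_finrank_add_finrank _ _)

lemma rank_submatrix_le' (X : Matrix (Fin 7) (Fin 7) ℝ) (f g : Fin 4 → Fin 7) :
    (X.submatrix f g).rank ≤ X.rank := by
  have hP : ((1 : Matrix (Fin 7) (Fin 7) ℝ).submatrix f (Equiv.refl (Fin 7))) * X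
      = X.submatrix f id := by
    rw [Matrix.one_submatrix_mul]; simp
  have hQ : (X.submatrix f id) * ((1 : Matrix (Fin 7) (Fin 7) ℝ).submatrix (Equiv.refl (Fin 7)) g)
      = X.submatrix f g := by
    rw [Matrix.mul_submatrix_one]; simp [Matrix.submatrix_submatrix]
  calc (X.submatrix f g).rank
      = (((1 : Matrix (Fin 7) (Fin 7) ℝ).submatrix f (Equiv.refl (Fin 7))) * (X *
        ((1 : Matrix (Fin 7) (Fin 7) ℝ).submatrix (Equiv.refl (Fin 7)) g))).rank := by
        rw [← Matrix.mul_assoc, hP, hQ]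
    _ ≤ (X * ((1 : Matrix (Fin 7) (Fin 7) ℝ).submatrix (Equiv.refl (Fin 7)) g)).rank :=
        Matrix.rank_mul_le_right _ _
    _ ≤ X.rank := Matrix.rank_mul_le_left _ _

lemma rank_vecMulVec_le (u v : E7) : (Matrix.vecMulVec (u : Fin 7 → ℝ) v).rank ≤ 1 := by
  rw [Matrix.vecMulVec_eq (Fin 1)]
  exact (Matrix.rank_mul_le_right _ _).trans ((Matrix.rank_le_card_height _).trans (by simp))

set_option maxHeartbeats 4000000 in
lemma contract_sq (u : E7) :
    contractPhi u * contractPhi u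
      = Matrix.vecMulVec (u : Fin 7 → ℝ) u - (∑ p, u p ^ 2) • 1 := by
  ext i j
  fin_cases i <;> fin_cases j <;>
    simp [Matrix.mul_apply, contractPhi, Fin.sum_univ_seven, Matrix.vecMulVec,
      Matrix.one_apply] <;> ring

lemma part7 (X : Matrix (Fin 7) (Fin 7) ℝ) (hskew : Xᵀ = -X) (u : E7)
    (hXu : X = contractPhi u) (h24 : X.rank = 2 ∨ X.rank = 4) : False := by
  by_cases hu : u = 0
  · have hX0 : X = 0 := by
      rw [hXu, hu]; ext i j; simp [contractPhi]
    rw [hX0, Matrix.rank_zero] at h24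
    rcases h24 with h | h <;> exact absurd h (by norm_num)
  · obtain ⟨p, hp⟩ : ∃ p, u p ≠ 0 := by
      by_contra hc; push_neg at hc; exact hu (PiLp.ext hc)
    have hc : 0 < ∑ q, u q ^ 2 :=
      Finset.sum_pos' (fun i _ => sq_nonneg _) ⟨p, Finset.mem_univ _, by positivity⟩
    have key : Matrix.vecMulVec (u : Fin 7 → ℝ) u + Xᵀ * X
        = (∑ q, u q ^ 2) • (1 : Matrix (Fin 7) (Fin 7) ℝ) := by
      rw [hskew, hXu, Matrix.neg_mul, contract_sq]
      abel
    have hrank1 : ((∑ q, u q ^ 2) • (1 : Matrix (Fin 7) (Fin 7) ℝ)).rank = 7 := by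
      have hu7 : IsUnit ((∑ q, u q ^ 2) • (1 : Matrix (Fin 7) (Fin 7) ℝ)) := by
        rw [Matrix.isUnit_iff_isUnit_det, Matrix.det_smul, Matrix.det_one, mul_one]
        exact isUnit_iff_ne_zero.mpr (pow_ne_zero _ hc.ne')
      have h := Matrix.rank_of_isUnit _ hu7
      simpa using h
    have hle : ((∑ q, u q ^ 2) • (1 : Matrix (Fin 7) (Fin 7) ℝ)).rank ≤ 1 + X.rank := by
      rw [← key]
      exact (rank_add_le' _ _).trans
        (add_le_add (rank_vecMulVec_le u u) (Matrix.rank_mul_le_right _ _))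
    rw [hrank1] at hle
    rcases h24 with h | h <;> rw [h] at hle <;> omega

set_option maxHeartbeats 16000000 in
lemma part14 (X : Matrix (Fin 7) (Fin 7) ℝ) (hskew : Xᵀ = -X) (h14 : IsType14 X)
    (hr : X.rank = 2) : False := by
  have hsk : ∀ i j, X j i = -X i j := fun i j => by
    have h := congrFun (congrFun hskew i) j
    simpa using h
  have hd : ∀ i, X i i = 0 := fun i => by have h := hsk i i; linarith
  have e0 : X 1 2 + X 3 4 - X 5 6 = 0 := by
    have h := h14 1 3 6
    rw [Fin.sum_univ_seven] at h
    simp only [phv_0_3_6, phv_1_0_6, phv_1_1_6, phv_1_2_6, phv_1_3_0, phv_1_3_1, phv_1_3_2, phv_1_3_3, phv_1_3_4, phv_1_3_5, phv_1_3_6, phv_1_4_6, phv_1_5_6, phv_1_6_6, phv_2_3_6, phv_3_3_6, phv_4_3_6, phv_5_3_6, phv_6_3_6] at h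
    linarith [hsk 0 1, hsk 0 2, hsk 0 3, hsk 0 4, hsk 0 5, hsk 0 6, hsk 1 2, hsk 1 3, hsk 1 4, hsk 1 5, hsk 1 6, hsk 2 3, hsk 2 4, hsk 2 5, hsk 2 6, hsk 3 4, hsk 3 5, hsk 3 6, hsk 4 5, hsk 4 6, hsk 5 6, hd 0, hd 1, hd 2, hd 3, hd 4, hd 5, hd 6]
  have e1 : -(X 0 2) + X 3 5 + X 4 6 = 0 := by
    have h := h14 0 4 5
    rw [Fin.sum_univ_seven] at h
    simp only [phv_0_0_5, phv_0_1_5, phv_0_2_5, phv_0_3_5, phv_0_4_0, phv_0_4_1, phv_0_4_2, phv_0_4_3, phv_0_4_4, phv_0_4_5, phv_0_4_6, phv_0_5_5, phv_0_6_5, phv_1_4_5, phv_2_4_5, phv_3_4_5, phv_4_4_5, phv_5_4_5, phv_6_4_5] at h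
    linarith [hsk 0 1, hsk 0 2, hsk 0 3, hsk 0 4, hsk 0 5, hsk 0 6, hsk 1 2, hsk 1 3, hsk 1 4, hsk 1 5, hsk 1 6, hsk 2 3, hsk 2 4, hsk 2 5, hsk 2 6, hsk 3 4, hsk 3 5, hsk 3 6, hsk 4 5, hsk 4 6, hsk 5 6, hd 0, hd 1, hd 2, hd 3, hd 4, hd 5, hd 6]
  have e2 : X 0 1 + X 3 6 - X 4 5 = 0 := by
    have h := h14 0 3 5
    rw [Fin.sum_univ_seven] at h
    simp only [phv_0_0_5, phv_0_1_5, phv_0_2_5, phv_0_3_0, phv_0_3_1, phv_0_3_2, phv_0_3_3, phv_0_3_4, phv_0_3_5, phv_0_3_6, phv_0_4_5, phv_0_5_5, phv_0_6_5, phv_1_3_5, phv_2_3_5, phv_3_3_5, phv_4_3_5, phv_5_3_5, phv_6_3_5] at h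
    linarith [hsk 0 1, hsk 0 2, hsk 0 3, hsk 0 4, hsk 0 5, hsk 0 6, hsk 1 2, hsk 1 3, hsk 1 4, hsk 1 5, hsk 1 6, hsk 2 3, hsk 2 4, hsk 2 5, hsk 2 6, hsk 3 4, hsk 3 5, hsk 3 6, hsk 4 5, hsk 4 6, hsk 5 6, hd 0, hd 1, hd 2, hd 3, hd 4, hd 5, hd 6]
  have e3 : -(X 0 4) - X 1 5 - X 2 6 = 0 := by
    have h := h14 0 1 6
    rw [Fin.sum_univ_seven] at h
    simp only [phv_0_0_6, phv_0_1_0, phv_0_1_1, phv_0_1_2, phv_0_1_3, phv_0_1_4, phv_0_1_5, phv_0_1_6, phv_0_2_6, phv_0_3_6, phv_0_4_6, phv_0_5_6, phv_0_6_6, phv_1_1_6, phv_2_1_6, phv_3_1_6, phv_4_1_6, phv_5_1_6, phv_6_1_6] at h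
    linarith [hsk 0 1, hsk 0 2, hsk 0 3, hsk 0 4, hsk 0 5, hsk 0 6, hsk 1 2, hsk 1 3, hsk 1 4, hsk 1 5, hsk 1 6, hsk 2 3, hsk 2 4, hsk 2 5, hsk 2 6, hsk 3 4, hsk 3 5, hsk 3 6, hsk 4 5, hsk 4 6, hsk 5 6, hd 0, hd 1, hd 2, hd 3, hd 4, hd 5, hd 6]
  have e4 : X 0 3 - X 1 6 + X 2 5 = 0 := by
    have h := h14 0 5 1
    rw [Fin.sum_univ_seven] at h
    simp only [phv_0_0_1, phv_0_1_1, phv_0_2_1, phv_0_3_1, phv_0_4_1, phv_0_5_0, phv_0_5_1, phv_0_5_2, phv_0_5_3, phv_0_5_4, phv_0_5_5, phv_0_5_6, phv_0_6_1, phv_1_5_1, phv_2_5_1, phv_3_5_1, phv_4_5_1, phv_5_5_1, phv_6_5_1] at h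
    linarith [hsk 0 1, hsk 0 2, hsk 0 3, hsk 0 4, hsk 0 5, hsk 0 6, hsk 1 2, hsk 1 3, hsk 1 4, hsk 1 5, hsk 1 6, hsk 2 3, hsk 2 4, hsk 2 5, hsk 2 6, hsk 3 4, hsk 3 5, hsk 3 6, hsk 4 5, hsk 4 6, hsk 5 6, hd 0, hd 1, hd 2, hd 3, hd 4, hd 5, hd 6]
  have e5 : X 0 6 + X 1 3 - X 2 4 = 0 := by
    have h := h14 0 1 4
    rw [Fin.sum_univ_seven] at h
    simp only [phv_0_0_4, phv_0_1_0, phv_0_1_1, phv_0_1_2, phv_0_1_3, phv_0_1_4, phv_0_1_5, phv_0_1_6, phv_0_2_4, phv_0_3_4, phv_0_4_4, phv_0_5_4, phv_0_6_4, phv_1_1_4, phv_2_1_4, phv_3_1_4, phv_4_1_4, phv_5_1_4, phv_6_1_4] at h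
    linarith [hsk 0 1, hsk 0 2, hsk 0 3, hsk 0 4, hsk 0 5, hsk 0 6, hsk 1 2, hsk 1 3, hsk 1 4, hsk 1 5, hsk 1 6, hsk 2 3, hsk 2 4, hsk 2 5, hsk 2 6, hsk 3 4, hsk 3 5, hsk 3 6, hsk 4 5, hsk 4 6, hsk 5 6, hd 0, hd 1, hd 2, hd 3, hd 4, hd 5, hd 6]
  have e6 : -(X 0 5) + X 1 4 + X 2 3 = 0 := by
    have h := h14 0 2 4
    rw [Fin.sum_univ_seven] at h
    simp only [phv_0_0_4, phv_0_1_4, phv_0_2_0, phv_0_2_1, phv_0_2_2, phv_0_2_3, phv_0_2_4, phv_0_2_5, phv_0_2_6, phv_0_3_4, phv_0_4_4, phv_0_5_4, phv_0_6_4, phv_1_2_4, phv_2_2_4, phv_3_2_4, phv_4_2_4, phv_5_2_4, phv_6_2_4] at h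
    linarith [hsk 0 1, hsk 0 2, hsk 0 3, hsk 0 4, hsk 0 5, hsk 0 6, hsk 1 2, hsk 1 3, hsk 1 4, hsk 1 5, hsk 1 6, hsk 2 3, hsk 2 4, hsk 2 5, hsk 2 6, hsk 3 4, hsk 3 5, hsk 3 6, hsk 4 5, hsk 4 6, hsk 5 6, hd 0, hd 1, hd 2, hd 3, hd 4, hd 5, hd 6]
  have hsub0 : (X.submatrix ![3,4,5,6] ![3,4,5,6]).rank ≤ 2 :=
    hr ▸ rank_submatrix_le' X _ _
  have hdet0 : (X.submatrix ![3,4,5,6] ![3,4,5,6]).det = 0 := by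
    by_contra hne
    have hu : IsUnit (X.submatrix ![3,4,5,6] ![(3:Fin 7),4,5,6]) :=
      (Matrix.isUnit_iff_isUnit_det _).mpr (isUnit_iff_ne_zero.mpr hne)
    have h4 := Matrix.rank_of_isUnit _ hu
    rw [h4] at hsub0
    simp at hsub0
  have hMat0 : X.submatrix ![3,4,5,6] ![(3:Fin 7),4,5,6] =
      !![0, X 3 4, X 3 5, X 3 6; -(X 3 4), 0, X 4 5, X 4 6;
        -(X 3 5), -(X 4 5), 0, X 5 6; -(X 3 6), -(X 4 6), -(X 5 6), 0] := by
    ext i j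
    fin_cases i <;> fin_cases j <;>
      simp [Matrix.submatrix_apply, hd, hsk 3 4, hsk 3 5, hsk 3 6, hsk 4 5, hsk 4 6, hsk 5 6]
  have pf0 : X 3 4 * X 5 6 - X 3 5 * X 4 6 + X 3 6 * X 4 5 = 0 := by
    have h2 : (X 3 4 * X 5 6 - X 3 5 * X 4 6 + X 3 6 * X 4 5)^2 = 0 := by
      rw [← det_skew4, ← hMat0, hdet0]
    exact pow_eq_zero_iff two_ne_zero |>.mp h2
  have hsub1 : (X.submatrix ![0,2,3,5] ![0,2,3,5]).rank ≤ 2 :=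
    hr ▸ rank_submatrix_le' X _ _
  have hdet1 : (X.submatrix ![0,2,3,5] ![0,2,3,5]).det = 0 := by
    by_contra hne
    have hu : IsUnit (X.submatrix ![0,2,3,5] ![(0:Fin 7),2,3,5]) :=
      (Matrix.isUnit_iff_isUnit_det _).mpr (isUnit_iff_ne_zero.mpr hne)
    have h4 := Matrix.rank_of_isUnit _ hu
    rw [h4] at hsub1
    simp at hsub1
  have hMat1 : X.submatrix ![0,2,3,5] ![(0:Fin 7),2,3,5] =
      !![0, X 0 2, X 0 3, X 0 5; -(X 0 2), 0, X 2 3, X 2 5;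
        -(X 0 3), -(X 2 3), 0, X 3 5; -(X 0 5), -(X 2 5), -(X 3 5), 0] := by
    ext i j
    fin_cases i <;> fin_cases j <;>
      simp [Matrix.submatrix_apply, hd, hsk 0 2, hsk 0 3, hsk 0 5, hsk 2 3, hsk 2 5, hsk 3 5]
  have pf1 : X 0 2 * X 3 5 - X 0 3 * X 2 5 + X 0 5 * X 2 3 = 0 := by
    have h2 : (X 0 2 * X 3 5 - X 0 3 * X 2 5 + X 0 5 * X 2 3)^2 = 0 := by
      rw [← det_skew4, ← hMat1, hdet1]
    exact pow_eq_zero_iff two_ne_zero |>.mp h2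
  have hsub2 : (X.submatrix ![1,2,5,6] ![1,2,5,6]).rank ≤ 2 :=
    hr ▸ rank_submatrix_le' X _ _
  have hdet2 : (X.submatrix ![1,2,5,6] ![1,2,5,6]).det = 0 := by
    by_contra hne
    have hu : IsUnit (X.submatrix ![1,2,5,6] ![(1:Fin 7),2,5,6]) :=
      (Matrix.isUnit_iff_isUnit_det _).mpr (isUnit_iff_ne_zero.mpr hne)
    have h4 := Matrix.rank_of_isUnit _ hu
    rw [h4] at hsub2
    simp at hsub2
  have hMat2 : X.submatrix ![1,2,5,6] ![(1:Fin 7),2,5,6] =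
      !![0, X 1 2, X 1 5, X 1 6; -(X 1 2), 0, X 2 5, X 2 6;
        -(X 1 5), -(X 2 5), 0, X 5 6; -(X 1 6), -(X 2 6), -(X 5 6), 0] := by
    ext i j
    fin_cases i <;> fin_cases j <;>
      simp [Matrix.submatrix_apply, hd, hsk 1 2, hsk 1 5, hsk 1 6, hsk 2 5, hsk 2 6, hsk 5 6]
  have pf2 : X 1 2 * X 5 6 - X 1 5 * X 2 6 + X 1 6 * X 2 5 = 0 := by
    have h2 : (X 1 2 * X 5 6 - X 1 5 * X 2 6 + X 1 6 * X 2 5)^2 = 0 := by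
      rw [← det_skew4, ← hMat2, hdet2]
    exact pow_eq_zero_iff two_ne_zero |>.mp h2
  have hsub3 : (X.submatrix ![0,2,4,6] ![0,2,4,6]).rank ≤ 2 :=
    hr ▸ rank_submatrix_le' X _ _
  have hdet3 : (X.submatrix ![0,2,4,6] ![0,2,4,6]).det = 0 := by
    by_contra hne
    have hu : IsUnit (X.submatrix ![0,2,4,6] ![(0:Fin 7),2,4,6]) :=
      (Matrix.isUnit_iff_isUnit_det _).mpr (isUnit_iff_ne_zero.mpr hne)
    have h4 := Matrix.rank_of_isUnit _ hu
    rw [h4] at hsub3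
    simp at hsub3
  have hMat3 : X.submatrix ![0,2,4,6] ![(0:Fin 7),2,4,6] =
      !![0, X 0 2, X 0 4, X 0 6; -(X 0 2), 0, X 2 4, X 2 6;
        -(X 0 4), -(X 2 4), 0, X 4 6; -(X 0 6), -(X 2 6), -(X 4 6), 0] := by
    ext i j
    fin_cases i <;> fin_cases j <;>
      simp [Matrix.submatrix_apply, hd, hsk 0 2, hsk 0 4, hsk 0 6, hsk 2 4, hsk 2 6, hsk 4 6]
  have pf3 : X 0 2 * X 4 6 - X 0 4 * X 2 6 + X 0 6 * X 2 4 = 0 := by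
    have h2 : (X 0 2 * X 4 6 - X 0 4 * X 2 6 + X 0 6 * X 2 4)^2 = 0 := by
      rw [← det_skew4, ← hMat3, hdet3]
    exact pow_eq_zero_iff two_ne_zero |>.mp h2
  have hsub4 : (X.submatrix ![0,1,4,5] ![0,1,4,5]).rank ≤ 2 :=
    hr ▸ rank_submatrix_le' X _ _
  have hdet4 : (X.submatrix ![0,1,4,5] ![0,1,4,5]).det = 0 := by
    by_contra hne
    have hu : IsUnit (X.submatrix ![0,1,4,5] ![(0:Fin 7),1,4,5]) :=
      (Matrix.isUnit_iff_isUnit_det _).mpr (isUnit_iff_ne_zero.mpr hne)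
    have h4 := Matrix.rank_of_isUnit _ hu
    rw [h4] at hsub4
    simp at hsub4
  have hMat4 : X.submatrix ![0,1,4,5] ![(0:Fin 7),1,4,5] =
      !![0, X 0 1, X 0 4, X 0 5; -(X 0 1), 0, X 1 4, X 1 5;
        -(X 0 4), -(X 1 4), 0, X 4 5; -(X 0 5), -(X 1 5), -(X 4 5), 0] := by
    ext i j
    fin_cases i <;> fin_cases j <;>
      simp [Matrix.submatrix_apply, hd, hsk 0 1, hsk 0 4, hsk 0 5, hsk 1 4, hsk 1 5, hsk 4 5]
  have pf4 : X 0 1 * X 4 5 - X 0 4 * X 1 5 + X 0 5 * X 1 4 = 0 := by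
    have h2 : (X 0 1 * X 4 5 - X 0 4 * X 1 5 + X 0 5 * X 1 4)^2 = 0 := by
      rw [← det_skew4, ← hMat4, hdet4]
    exact pow_eq_zero_iff two_ne_zero |>.mp h2
  have hsub5 : (X.submatrix ![1,2,3,4] ![1,2,3,4]).rank ≤ 2 :=
    hr ▸ rank_submatrix_le' X _ _
  have hdet5 : (X.submatrix ![1,2,3,4] ![1,2,3,4]).det = 0 := by
    by_contra hne
    have hu : IsUnit (X.submatrix ![1,2,3,4] ![(1:Fin 7),2,3,4]) :=
      (Matrix.isUnit_iff_isUnit_det _).mpr (isUnit_iff_ne_zero.mpr hne)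
    have h4 := Matrix.rank_of_isUnit _ hu
    rw [h4] at hsub5
    simp at hsub5
  have hMat5 : X.submatrix ![1,2,3,4] ![(1:Fin 7),2,3,4] =
      !![0, X 1 2, X 1 3, X 1 4; -(X 1 2), 0, X 2 3, X 2 4;
        -(X 1 3), -(X 2 3), 0, X 3 4; -(X 1 4), -(X 2 4), -(X 3 4), 0] := by
    ext i j
    fin_cases i <;> fin_cases j <;>
      simp [Matrix.submatrix_apply, hd, hsk 1 2, hsk 1 3, hsk 1 4, hsk 2 3, hsk 2 4, hsk 3 4]
  have pf5 : X 1 2 * X 3 4 - X 1 3 * X 2 4 + X 1 4 * X 2 3 = 0 := by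
    have h2 : (X 1 2 * X 3 4 - X 1 3 * X 2 4 + X 1 4 * X 2 3)^2 = 0 := by
      rw [← det_skew4, ← hMat5, hdet5]
    exact pow_eq_zero_iff two_ne_zero |>.mp h2
  have hsub6 : (X.submatrix ![0,1,3,6] ![0,1,3,6]).rank ≤ 2 :=
    hr ▸ rank_submatrix_le' X _ _
  have hdet6 : (X.submatrix ![0,1,3,6] ![0,1,3,6]).det = 0 := by
    by_contra hne
    have hu : IsUnit (X.submatrix ![0,1,3,6] ![(0:Fin 7),1,3,6]) :=
      (Matrix.isUnit_iff_isUnit_det _).mpr (isUnit_iff_ne_zero.mpr hne)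
    have h4 := Matrix.rank_of_isUnit _ hu
    rw [h4] at hsub6
    simp at hsub6
  have hMat6 : X.submatrix ![0,1,3,6] ![(0:Fin 7),1,3,6] =
      !![0, X 0 1, X 0 3, X 0 6; -(X 0 1), 0, X 1 3, X 1 6;
        -(X 0 3), -(X 1 3), 0, X 3 6; -(X 0 6), -(X 1 6), -(X 3 6), 0] := by
    ext i j
    fin_cases i <;> fin_cases j <;>
      simp [Matrix.submatrix_apply, hd, hsk 0 1, hsk 0 3, hsk 0 6, hsk 1 3, hsk 1 6, hsk 3 6]
  have pf6 : X 0 1 * X 3 6 - X 0 3 * X 1 6 + X 0 6 * X 1 3 = 0 := by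
    have h2 : (X 0 1 * X 3 6 - X 0 3 * X 1 6 + X 0 6 * X 1 3)^2 = 0 := by
      rw [← det_skew4, ← hMat6, hdet6]
    exact pow_eq_zero_iff two_ne_zero |>.mp h2
  have hsum : (X 0 1)^2 + (X 0 2)^2 + (X 0 3)^2 + (X 0 4)^2 + (X 0 5)^2 + (X 0 6)^2 + (X 1 2)^2 + (X 1 3)^2 + (X 1 4)^2 + (X 1 5)^2 + (X 1 6)^2 + (X 2 3)^2 + (X 2 4)^2 + (X 2 5)^2 + (X 2 6)^2 + (X 3 4)^2 + (X 3 5)^2 + (X 3 6)^2 + (X 4 5)^2 + (X 4 6)^2 + (X 5 6)^2 = 0 := by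
    linear_combination (X 1 2 + X 3 4 - X 5 6) * e0 + (-(X 0 2) + X 3 5 + X 4 6) * e1 + (X 0 1 + X 3 6 - X 4 5) * e2 + (-(X 0 4) - X 1 5 - X 2 6) * e3 + (X 0 3 - X 1 6 + X 2 5) * e4 + (X 0 6 + X 1 3 - X 2 4) * e5 + (-(X 0 5) + X 1 4 + X 2 3) * e6 + 2 * pf0 + 2 * pf1 + 2 * pf2 + 2 * pf3 + 2 * pf4 - 2 * pf5 - 2 * pf6
  have z01 : X 0 1 = 0 := by
    have h2 : (X 0 1)^2 = 0 := by linarith [sq_nonneg (X 0 1), sq_nonneg (X 0 2), sq_nonneg (X 0 3), sq_nonneg (X 0 4), sq_nonneg (X 0 5), sq_nonneg (X 0 6), sq_nonneg (X 1 2), sq_nonneg (X 1 3), sq_nonneg (X 1 4), sq_nonneg (X 1 5), sq_nonneg (X 1 6), sq_nonneg (X 2 3), sq_nonneg (X 2 4), sq_nonneg (X 2 5), sq_nonneg (X 2 6), sq_nonneg (X 3 4), sq_nonneg (X 3 5), sq_nonneg (X 3 6), sq_nonneg (X 4 5), sq_nonneg (X 4 6), sq_nonneg (X 5 6)]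
    exact pow_eq_zero_iff two_ne_zero |>.mp h2
  have z02 : X 0 2 = 0 := by
    have h2 : (X 0 2)^2 = 0 := by linarith [sq_nonneg (X 0 1), sq_nonneg (X 0 2), sq_nonneg (X 0 3), sq_nonneg (X 0 4), sq_nonneg (X 0 5), sq_nonneg (X 0 6), sq_nonneg (X 1 2), sq_nonneg (X 1 3), sq_nonneg (X 1 4), sq_nonneg (X 1 5), sq_nonneg (X 1 6), sq_nonneg (X 2 3), sq_nonneg (X 2 4), sq_nonneg (X 2 5), sq_nonneg (X 2 6), sq_nonneg (X 3 4), sq_nonneg (X 3 5), sq_nonneg (X 3 6), sq_nonneg (X 4 5), sq_nonneg (X 4 6), sq_nonneg (X 5 6)]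
    exact pow_eq_zero_iff two_ne_zero |>.mp h2
  have z03 : X 0 3 = 0 := by
    have h2 : (X 0 3)^2 = 0 := by linarith [sq_nonneg (X 0 1), sq_nonneg (X 0 2), sq_nonneg (X 0 3), sq_nonneg (X 0 4), sq_nonneg (X 0 5), sq_nonneg (X 0 6), sq_nonneg (X 1 2), sq_nonneg (X 1 3), sq_nonneg (X 1 4), sq_nonneg (X 1 5), sq_nonneg (X 1 6), sq_nonneg (X 2 3), sq_nonneg (X 2 4), sq_nonneg (X 2 5), sq_nonneg (X 2 6), sq_nonneg (X 3 4), sq_nonneg (X 3 5), sq_nonneg (X 3 6), sq_nonneg (X 4 5), sq_nonneg (X 4 6), sq_nonneg (X 5 6)]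
    exact pow_eq_zero_iff two_ne_zero |>.mp h2
  have z04 : X 0 4 = 0 := by
    have h2 : (X 0 4)^2 = 0 := by linarith [sq_nonneg (X 0 1), sq_nonneg (X 0 2), sq_nonneg (X 0 3), sq_nonneg (X 0 4), sq_nonneg (X 0 5), sq_nonneg (X 0 6), sq_nonneg (X 1 2), sq_nonneg (X 1 3), sq_nonneg (X 1 4), sq_nonneg (X 1 5), sq_nonneg (X 1 6), sq_nonneg (X 2 3), sq_nonneg (X 2 4), sq_nonneg (X 2 5), sq_nonneg (X 2 6), sq_nonneg (X 3 4), sq_nonneg (X 3 5), sq_nonneg (X 3 6), sq_nonneg (X 4 5), sq_nonneg (X 4 6), sq_nonneg (X 5 6)]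
    exact pow_eq_zero_iff two_ne_zero |>.mp h2
  have z05 : X 0 5 = 0 := by
    have h2 : (X 0 5)^2 = 0 := by linarith [sq_nonneg (X 0 1), sq_nonneg (X 0 2), sq_nonneg (X 0 3), sq_nonneg (X 0 4), sq_nonneg (X 0 5), sq_nonneg (X 0 6), sq_nonneg (X 1 2), sq_nonneg (X 1 3), sq_nonneg (X 1 4), sq_nonneg (X 1 5), sq_nonneg (X 1 6), sq_nonneg (X 2 3), sq_nonneg (X 2 4), sq_nonneg (X 2 5), sq_nonneg (X 2 6), sq_nonneg (X 3 4), sq_nonneg (X 3 5), sq_nonneg (X 3 6), sq_nonneg (X 4 5), sq_nonneg (X 4 6), sq_nonneg (X 5 6)]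
    exact pow_eq_zero_iff two_ne_zero |>.mp h2
  have z06 : X 0 6 = 0 := by
    have h2 : (X 0 6)^2 = 0 := by linarith [sq_nonneg (X 0 1), sq_nonneg (X 0 2), sq_nonneg (X 0 3), sq_nonneg (X 0 4), sq_nonneg (X 0 5), sq_nonneg (X 0 6), sq_nonneg (X 1 2), sq_nonneg (X 1 3), sq_nonneg (X 1 4), sq_nonneg (X 1 5), sq_nonneg (X 1 6), sq_nonneg (X 2 3), sq_nonneg (X 2 4), sq_nonneg (X 2 5), sq_nonneg (X 2 6), sq_nonneg (X 3 4), sq_nonneg (X 3 5), sq_nonneg (X 3 6), sq_nonneg (X 4 5), sq_nonneg (X 4 6), sq_nonneg (X 5 6)]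
    exact pow_eq_zero_iff two_ne_zero |>.mp h2
  have z12 : X 1 2 = 0 := by
    have h2 : (X 1 2)^2 = 0 := by linarith [sq_nonneg (X 0 1), sq_nonneg (X 0 2), sq_nonneg (X 0 3), sq_nonneg (X 0 4), sq_nonneg (X 0 5), sq_nonneg (X 0 6), sq_nonneg (X 1 2), sq_nonneg (X 1 3), sq_nonneg (X 1 4), sq_nonneg (X 1 5), sq_nonneg (X 1 6), sq_nonneg (X 2 3), sq_nonneg (X 2 4), sq_nonneg (X 2 5), sq_nonneg (X 2 6), sq_nonneg (X 3 4), sq_nonneg (X 3 5), sq_nonneg (X 3 6), sq_nonneg (X 4 5), sq_nonneg (X 4 6), sq_nonneg (X 5 6)]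
    exact pow_eq_zero_iff two_ne_zero |>.mp h2
  have z13 : X 1 3 = 0 := by
    have h2 : (X 1 3)^2 = 0 := by linarith [sq_nonneg (X 0 1), sq_nonneg (X 0 2), sq_nonneg (X 0 3), sq_nonneg (X 0 4), sq_nonneg (X 0 5), sq_nonneg (X 0 6), sq_nonneg (X 1 2), sq_nonneg (X 1 3), sq_nonneg (X 1 4), sq_nonneg (X 1 5), sq_nonneg (X 1 6), sq_nonneg (X 2 3), sq_nonneg (X 2 4), sq_nonneg (X 2 5), sq_nonneg (X 2 6), sq_nonneg (X 3 4), sq_nonneg (X 3 5), sq_nonneg (X 3 6), sq_nonneg (X 4 5), sq_nonneg (X 4 6), sq_nonneg (X 5 6)]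
    exact pow_eq_zero_iff two_ne_zero |>.mp h2
  have z14 : X 1 4 = 0 := by
    have h2 : (X 1 4)^2 = 0 := by linarith [sq_nonneg (X 0 1), sq_nonneg (X 0 2), sq_nonneg (X 0 3), sq_nonneg (X 0 4), sq_nonneg (X 0 5), sq_nonneg (X 0 6), sq_nonneg (X 1 2), sq_nonneg (X 1 3), sq_nonneg (X 1 4), sq_nonneg (X 1 5), sq_nonneg (X 1 6), sq_nonneg (X 2 3), sq_nonneg (X 2 4), sq_nonneg (X 2 5), sq_nonneg (X 2 6), sq_nonneg (X 3 4), sq_nonneg (X 3 5), sq_nonneg (X 3 6), sq_nonneg (X 4 5), sq_nonneg (X 4 6), sq_nonneg (X 5 6)]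
    exact pow_eq_zero_iff two_ne_zero |>.mp h2
  have z15 : X 1 5 = 0 := by
    have h2 : (X 1 5)^2 = 0 := by linarith [sq_nonneg (X 0 1), sq_nonneg (X 0 2), sq_nonneg (X 0 3), sq_nonneg (X 0 4), sq_nonneg (X 0 5), sq_nonneg (X 0 6), sq_nonneg (X 1 2), sq_nonneg (X 1 3), sq_nonneg (X 1 4), sq_nonneg (X 1 5), sq_nonneg (X 1 6), sq_nonneg (X 2 3), sq_nonneg (X 2 4), sq_nonneg (X 2 5), sq_nonneg (X 2 6), sq_nonneg (X 3 4), sq_nonneg (X 3 5), sq_nonneg (X 3 6), sq_nonneg (X 4 5), sq_nonneg (X 4 6), sq_nonneg (X 5 6)]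
    exact pow_eq_zero_iff two_ne_zero |>.mp h2
  have z16 : X 1 6 = 0 := by
    have h2 : (X 1 6)^2 = 0 := by linarith [sq_nonneg (X 0 1), sq_nonneg (X 0 2), sq_nonneg (X 0 3), sq_nonneg (X 0 4), sq_nonneg (X 0 5), sq_nonneg (X 0 6), sq_nonneg (X 1 2), sq_nonneg (X 1 3), sq_nonneg (X 1 4), sq_nonneg (X 1 5), sq_nonneg (X 1 6), sq_nonneg (X 2 3), sq_nonneg (X 2 4), sq_nonneg (X 2 5), sq_nonneg (X 2 6), sq_nonneg (X 3 4), sq_nonneg (X 3 5), sq_nonneg (X 3 6), sq_nonneg (X 4 5), sq_nonneg (X 4 6), sq_nonneg (X 5 6)]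
    exact pow_eq_zero_iff two_ne_zero |>.mp h2
  have z23 : X 2 3 = 0 := by
    have h2 : (X 2 3)^2 = 0 := by linarith [sq_nonneg (X 0 1), sq_nonneg (X 0 2), sq_nonneg (X 0 3), sq_nonneg (X 0 4), sq_nonneg (X 0 5), sq_nonneg (X 0 6), sq_nonneg (X 1 2), sq_nonneg (X 1 3), sq_nonneg (X 1 4), sq_nonneg (X 1 5), sq_nonneg (X 1 6), sq_nonneg (X 2 3), sq_nonneg (X 2 4), sq_nonneg (X 2 5), sq_nonneg (X 2 6), sq_nonneg (X 3 4), sq_nonneg (X 3 5), sq_nonneg (X 3 6), sq_nonneg (X 4 5), sq_nonneg (X 4 6), sq_nonneg (X 5 6)]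
    exact pow_eq_zero_iff two_ne_zero |>.mp h2
  have z24 : X 2 4 = 0 := by
    have h2 : (X 2 4)^2 = 0 := by linarith [sq_nonneg (X 0 1), sq_nonneg (X 0 2), sq_nonneg (X 0 3), sq_nonneg (X 0 4), sq_nonneg (X 0 5), sq_nonneg (X 0 6), sq_nonneg (X 1 2), sq_nonneg (X 1 3), sq_nonneg (X 1 4), sq_nonneg (X 1 5), sq_nonneg (X 1 6), sq_nonneg (X 2 3), sq_nonneg (X 2 4), sq_nonneg (X 2 5), sq_nonneg (X 2 6), sq_nonneg (X 3 4), sq_nonneg (X 3 5), sq_nonneg (X 3 6), sq_nonneg (X 4 5), sq_nonneg (X 4 6), sq_nonneg (X 5 6)]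
    exact pow_eq_zero_iff two_ne_zero |>.mp h2
  have z25 : X 2 5 = 0 := by
    have h2 : (X 2 5)^2 = 0 := by linarith [sq_nonneg (X 0 1), sq_nonneg (X 0 2), sq_nonneg (X 0 3), sq_nonneg (X 0 4), sq_nonneg (X 0 5), sq_nonneg (X 0 6), sq_nonneg (X 1 2), sq_nonneg (X 1 3), sq_nonneg (X 1 4), sq_nonneg (X 1 5), sq_nonneg (X 1 6), sq_nonneg (X 2 3), sq_nonneg (X 2 4), sq_nonneg (X 2 5), sq_nonneg (X 2 6), sq_nonneg (X 3 4), sq_nonneg (X 3 5), sq_nonneg (X 3 6), sq_nonneg (X 4 5), sq_nonneg (X 4 6), sq_nonneg (X 5 6)]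
    exact pow_eq_zero_iff two_ne_zero |>.mp h2
  have z26 : X 2 6 = 0 := by
    have h2 : (X 2 6)^2 = 0 := by linarith [sq_nonneg (X 0 1), sq_nonneg (X 0 2), sq_nonneg (X 0 3), sq_nonneg (X 0 4), sq_nonneg (X 0 5), sq_nonneg (X 0 6), sq_nonneg (X 1 2), sq_nonneg (X 1 3), sq_nonneg (X 1 4), sq_nonneg (X 1 5), sq_nonneg (X 1 6), sq_nonneg (X 2 3), sq_nonneg (X 2 4), sq_nonneg (X 2 5), sq_nonneg (X 2 6), sq_nonneg (X 3 4), sq_nonneg (X 3 5), sq_nonneg (X 3 6), sq_nonneg (X 4 5), sq_nonneg (X 4 6), sq_nonneg (X 5 6)]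
    exact pow_eq_zero_iff two_ne_zero |>.mp h2
  have z34 : X 3 4 = 0 := by
    have h2 : (X 3 4)^2 = 0 := by linarith [sq_nonneg (X 0 1), sq_nonneg (X 0 2), sq_nonneg (X 0 3), sq_nonneg (X 0 4), sq_nonneg (X 0 5), sq_nonneg (X 0 6), sq_nonneg (X 1 2), sq_nonneg (X 1 3), sq_nonneg (X 1 4), sq_nonneg (X 1 5), sq_nonneg (X 1 6), sq_nonneg (X 2 3), sq_nonneg (X 2 4), sq_nonneg (X 2 5), sq_nonneg (X 2 6), sq_nonneg (X 3 4), sq_nonneg (X 3 5), sq_nonneg (X 3 6), sq_nonneg (X 4 5), sq_nonneg (X 4 6), sq_nonneg (X 5 6)]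
    exact pow_eq_zero_iff two_ne_zero |>.mp h2
  have z35 : X 3 5 = 0 := by
    have h2 : (X 3 5)^2 = 0 := by linarith [sq_nonneg (X 0 1), sq_nonneg (X 0 2), sq_nonneg (X 0 3), sq_nonneg (X 0 4), sq_nonneg (X 0 5), sq_nonneg (X 0 6), sq_nonneg (X 1 2), sq_nonneg (X 1 3), sq_nonneg (X 1 4), sq_nonneg (X 1 5), sq_nonneg (X 1 6), sq_nonneg (X 2 3), sq_nonneg (X 2 4), sq_nonneg (X 2 5), sq_nonneg (X 2 6), sq_nonneg (X 3 4), sq_nonneg (X 3 5), sq_nonneg (X 3 6), sq_nonneg (X 4 5), sq_nonneg (X 4 6), sq_nonneg (X 5 6)]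
    exact pow_eq_zero_iff two_ne_zero |>.mp h2
  have z36 : X 3 6 = 0 := by
    have h2 : (X 3 6)^2 = 0 := by linarith [sq_nonneg (X 0 1), sq_nonneg (X 0 2), sq_nonneg (X 0 3), sq_nonneg (X 0 4), sq_nonneg (X 0 5), sq_nonneg (X 0 6), sq_nonneg (X 1 2), sq_nonneg (X 1 3), sq_nonneg (X 1 4), sq_nonneg (X 1 5), sq_nonneg (X 1 6), sq_nonneg (X 2 3), sq_nonneg (X 2 4), sq_nonneg (X 2 5), sq_nonneg (X 2 6), sq_nonneg (X 3 4), sq_nonneg (X 3 5), sq_nonneg (X 3 6), sq_nonneg (X 4 5), sq_nonneg (X 4 6), sq_nonneg (X 5 6)]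
    exact pow_eq_zero_iff two_ne_zero |>.mp h2
  have z45 : X 4 5 = 0 := by
    have h2 : (X 4 5)^2 = 0 := by linarith [sq_nonneg (X 0 1), sq_nonneg (X 0 2), sq_nonneg (X 0 3), sq_nonneg (X 0 4), sq_nonneg (X 0 5), sq_nonneg (X 0 6), sq_nonneg (X 1 2), sq_nonneg (X 1 3), sq_nonneg (X 1 4), sq_nonneg (X 1 5), sq_nonneg (X 1 6), sq_nonneg (X 2 3), sq_nonneg (X 2 4), sq_nonneg (X 2 5), sq_nonneg (X 2 6), sq_nonneg (X 3 4), sq_nonneg (X 3 5), sq_nonneg (X 3 6), sq_nonneg (X 4 5), sq_nonneg (X 4 6), sq_nonneg (X 5 6)]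
    exact pow_eq_zero_iff two_ne_zero |>.mp h2
  have z46 : X 4 6 = 0 := by
    have h2 : (X 4 6)^2 = 0 := by linarith [sq_nonneg (X 0 1), sq_nonneg (X 0 2), sq_nonneg (X 0 3), sq_nonneg (X 0 4), sq_nonneg (X 0 5), sq_nonneg (X 0 6), sq_nonneg (X 1 2), sq_nonneg (X 1 3), sq_nonneg (X 1 4), sq_nonneg (X 1 5), sq_nonneg (X 1 6), sq_nonneg (X 2 3), sq_nonneg (X 2 4), sq_nonneg (X 2 5), sq_nonneg (X 2 6), sq_nonneg (X 3 4), sq_nonneg (X 3 5), sq_nonneg (X 3 6), sq_nonneg (X 4 5), sq_nonneg (X 4 6), sq_nonneg (X 5 6)]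
    exact pow_eq_zero_iff two_ne_zero |>.mp h2
  have z56 : X 5 6 = 0 := by
    have h2 : (X 5 6)^2 = 0 := by linarith [sq_nonneg (X 0 1), sq_nonneg (X 0 2), sq_nonneg (X 0 3), sq_nonneg (X 0 4), sq_nonneg (X 0 5), sq_nonneg (X 0 6), sq_nonneg (X 1 2), sq_nonneg (X 1 3), sq_nonneg (X 1 4), sq_nonneg (X 1 5), sq_nonneg (X 1 6), sq_nonneg (X 2 3), sq_nonneg (X 2 4), sq_nonneg (X 2 5), sq_nonneg (X 2 6), sq_nonneg (X 3 4), sq_nonneg (X 3 5), sq_nonneg (X 3 6), sq_nonneg (X 4 5), sq_nonneg (X 4 6), sq_nonneg (X 5 6)]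
    exact pow_eq_zero_iff two_ne_zero |>.mp h2
  have hX0 : X = 0 := by
    ext i j
    fin_cases i <;> fin_cases j <;> simp [z01, z02, z03, z04, z05, z06, z12, z13, z14, z15, z16, z23, z24, z25, z26, z34, z35, z36, z45, z46, z56, hd, hsk 0 1, hsk 0 2, hsk 0 3, hsk 0 4, hsk 0 5, hsk 0 6, hsk 1 2, hsk 1 3, hsk 1 4, hsk 1 5, hsk 1 6, hsk 2 3, hsk 2 4, hsk 2 5, hsk 2 6, hsk 3 4, hsk 3 5, hsk 3 6, hsk 4 5, hsk 4 6, hsk 5 6]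
  rw [hX0, Matrix.rank_zero] at hr
  exact absurd hr (by norm_num)


/-- A rank-2 skew matrix is neither purely type `Λ²₇` nor `Λ²₁₄`;
a rank-4 one is not purely type `Λ²₇`. -/
theorem stmt6 (X : Matrix (Fin 7) (Fin 7) ℝ) (hskew : Xᵀ = -X) :
    (X.rank = 2 → (¬ ∃ u : E7, X = contractPhi u) ∧ ¬ IsType14 X) ∧
    (X.rank = 4 → ¬ ∃ u : E7, X = contractPhi u) := by
  refine ⟨fun h2 => ⟨fun ⟨u, hu⟩ => part7 X hskew u hu (Or.inl h2),
    fun h14 => part14 X hskew h14 h2⟩,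
    fun h4 => fun ⟨u, hu⟩ => part7 X hskew u hu (Or.inr h4)⟩

end
end

section
/- Let X be a skew-symmetric 7×7 real matrix of type Λ²₁₄, and let u, v, y ∈ E be pairwise orthogonal. Then X(u × y, v × y) = ‖y‖² X(u, v) + X(y, (u × v) × y). -/
open scoped BigOperators RealInnerProductSpace Matrix

noncomputable section

/-! ### Integer-valued versions of `φ` and `ψ` (for `decide`) -/

def kdZ (i j : Fin 7) : ℤ := if i = j then 1 else 0

def tripleZ (a b c i j k : Fin 7) : ℤ :=
  kdZ i a * (kdZ j b * kdZ k c - kdZ j c * kdZ k b)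
  - kdZ i b * (kdZ j a * kdZ k c - kdZ j c * kdZ k a)
  + kdZ i c * (kdZ j a * kdZ k b - kdZ j b * kdZ k a)

def phiZ (i j k : Fin 7) : ℤ :=
  tripleZ 0 1 2 i j k + tripleZ 0 3 4 i j k + tripleZ 1 3 5 i j k
  + tripleZ 2 3 6 i j k + tripleZ 1 4 6 i j k
  - tripleZ 2 4 5 i j k - tripleZ 0 5 6 i j k

def quadZ (a b c d i j k l : Fin 7) : ℤ :=
  kdZ i a * (kdZ j b * (kdZ k c * kdZ l d - kdZ k d * kdZ l c)
    - kdZ j c * (kdZ k b * kdZ l d - kdZ k d * kdZ l b)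
    + kdZ j d * (kdZ k b * kdZ l c - kdZ k c * kdZ l b))
  - kdZ i b * (kdZ j a * (kdZ k c * kdZ l d - kdZ k d * kdZ l c)
    - kdZ j c * (kdZ k a * kdZ l d - kdZ k d * kdZ l a)
    + kdZ j d * (kdZ k a * kdZ l c - kdZ k c * kdZ l a))
  + kdZ i c * (kdZ j a * (kdZ k b * kdZ l d - kdZ k d * kdZ l b)
    - kdZ j b * (kdZ k a * kdZ l d - kdZ k d * kdZ l a)
    + kdZ j d * (kdZ k a * kdZ l b - kdZ k b * kdZ l a))
  - kdZ i d * (kdZ j a * (kdZ k b * kdZ l c - kdZ k c * kdZ l b)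
    - kdZ j b * (kdZ k a * kdZ l c - kdZ k c * kdZ l a)
    + kdZ j c * (kdZ k a * kdZ l b - kdZ k b * kdZ l a))

def psiZ (i j k l : Fin 7) : ℤ :=
  quadZ 3 4 5 6 i j k l + quadZ 0 2 3 5 i j k l + quadZ 1 2 5 6 i j k l
  + quadZ 0 2 4 6 i j k l + quadZ 0 1 4 5 i j k l
  - quadZ 1 2 3 4 i j k l - quadZ 0 1 3 6 i j k l

set_option maxHeartbeats 4000000 in
theorem contractZ : ∀ a b c d : Fin 7,
    (∑ k, phiZ a b k * phiZ c d k)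
      = kdZ a c * kdZ b d - kdZ a d * kdZ b c - psiZ a b c d := by
  decide

/-! ### Cast lemmas -/

lemma kd_cast (i j : Fin 7) : kd i j = ((kdZ i j : ℤ) : ℝ) := by
  unfold kd kdZ; split <;> simp

lemma phi_cast (i j k : Fin 7) : phi7 i j k = ((phiZ i j k : ℤ) : ℝ) := by
  simp only [phi7, phiZ, tripleForm, tripleZ, kd_cast]; push_cast; ring

lemma quad_expand (a b c d i j k l : Fin 7) :
    quadForm a b c d i j k l =
  kd i a * (kd j b * (kd k c * kd l d - kd k d * kd l c)
    - kd j c * (kd k b * kd l d - kd k d * kd l b)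
    + kd j d * (kd k b * kd l c - kd k c * kd l b))
  - kd i b * (kd j a * (kd k c * kd l d - kd k d * kd l c)
    - kd j c * (kd k a * kd l d - kd k d * kd l a)
    + kd j d * (kd k a * kd l c - kd k c * kd l a))
  + kd i c * (kd j a * (kd k b * kd l d - kd k d * kd l b)
    - kd j b * (kd k a * kd l d - kd k d * kd l a)
    + kd j d * (kd k a * kd l b - kd k b * kd l a))
  - kd i d * (kd j a * (kd k b * kd l c - kd k c * kd l b)
    - kd j b * (kd k a * kd l c - kd k c * kd l a)
    + kd j c * (kd k a * kd l b - kd k b * kd l a)) := by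
  simp only [quadForm, Matrix.det_succ_row_zero, Fin.sum_univ_succ, Matrix.det_fin_three]
  simp [Fin.succAbove]
  ring

lemma psi_cast (i j k l : Fin 7) : psi7 i j k l = ((psiZ i j k l : ℤ) : ℝ) := by
  simp only [psi7, psiZ, quad_expand, quadZ, kd_cast]; push_cast; ring

/-- The fundamental contraction identity for `φ`. -/
lemma phi_contract (a b c d : Fin 7) :
    (∑ k, phi7 a b k * phi7 c d k)
      = kd a c * kd b d - kd a d * kd b c - psi7 a b c d := by
  simp only [phi_cast, psi_cast, kd_cast, ← Int.cast_mul, ← Int.cast_sub, ← Int.cast_sum]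
  exact_mod_cast congrArg (fun z : ℤ => (z : ℝ)) (contractZ a b c d)

/-! ### Symmetry lemmas for φ and ψ -/

lemma phi_cyc (p q k : Fin 7) : phi7 p q k = phi7 q k p := by
  simp only [phi7, tripleForm]; ring

lemma psi_swap23 (p q r s : Fin 7) : psi7 p r q s = -psi7 p q r s := by
  simp only [psi7, quad_expand]; ring

lemma psi_swap24 (p q r s : Fin 7) : psi7 p s r q = -psi7 p q r s := by
  simp only [psi7, quad_expand]; ring

/-! ### Sum bookkeeping -/

lemma sum_comm3 (f : Fin 7 → Fin 7 → Fin 7 → ℝ) :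
    (∑ i, ∑ j, ∑ p, f i j p) = ∑ p, ∑ i, ∑ j, f i j p := by
  rw [show (∑ i, ∑ j, ∑ p, f i j p) = ∑ i, ∑ p, ∑ j, f i j p from
    Finset.sum_congr rfl fun i _ => Finset.sum_comm, Finset.sum_comm]

/-- The dot product written as a plain sum. -/
def dotE (a b : E7) : ℝ := ∑ i, a i * b i

/-- The 4-form `ψ` evaluated on four vectors. -/
def Psi4 (a b c d : E7) : ℝ := ∑ p, ∑ q, ∑ r, ∑ s, a p * b q * c r * d s * psi7 p q r s

lemma inner_eq (a b : E7) : ⟪a, b⟫ = dotE a b := by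
  simp [dotE, PiLp.inner_apply, RCLike.inner_apply, conj_trivial]
  exact Finset.sum_congr rfl fun i _ => mul_comm _ _

lemma norm_sq_eq (y : E7) : ‖y‖ ^ 2 = dotE y y := by
  rw [← real_inner_self_eq_norm_sq, inner_eq]

lemma dotE_comm (a b : E7) : dotE a b = dotE b a := by
  simp only [dotE]; exact Finset.sum_congr rfl fun i _ => mul_comm _ _

lemma kd_collapse (c : E7) (p : Fin 7) : (∑ r, c r * kd p r) = c p := by
  simp [kd, mul_ite, eq_comm]

/-! ### Key bilinear identities -/

lemma cross_inner_aux (c d : E7) (p q : Fin 7) :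
    (∑ k, phi7 p q k * crossE c d k)
      = c p * d q - c q * d p - (∑ r, ∑ s, c r * d s * psi7 p q r s) := by
  have h1 : (∑ k, phi7 p q k * crossE c d k)
      = ∑ r, ∑ s, ∑ k, c r * d s * (phi7 p q k * phi7 r s k) := by
    simp only [crossE]
    rw [sum_comm3 fun r s k => c r * d s * (phi7 p q k * phi7 r s k)]
    refine Finset.sum_congr rfl fun k _ => ?_
    rw [Finset.mul_sum]
    refine Finset.sum_congr rfl fun r _ => ?_
    rw [Finset.mul_sum]
    exact Finset.sum_congr rfl fun s _ => by ring
  rw [h1]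
  calc (∑ r, ∑ s, ∑ k, c r * d s * (phi7 p q k * phi7 r s k))
      = ∑ r, ∑ s, (c r * kd p r * (d s * kd q s) - c r * kd q r * (d s * kd p s)
          - c r * d s * psi7 p q r s) := by
        refine Finset.sum_congr rfl fun r _ => Finset.sum_congr rfl fun s _ => ?_
        rw [← Finset.mul_sum, phi_contract]; ring
    _ = c p * d q - c q * d p - (∑ r, ∑ s, c r * d s * psi7 p q r s) := by
        simp only [Finset.sum_sub_distrib]
        rw [show (∑ r, ∑ s, c r * kd p r * (d s * kd q s))
            = (∑ r, c r * kd p r) * (∑ s, d s * kd q s) from by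
          rw [Finset.sum_mul_sum]]
        rw [show (∑ r, ∑ s, c r * kd q r * (d s * kd p s))
            = (∑ r, c r * kd q r) * (∑ s, d s * kd p s) from by
          rw [Finset.sum_mul_sum]]
        rw [kd_collapse, kd_collapse, kd_collapse, kd_collapse]

/-- `⟨a × b, c × d⟩ = ⟨a,c⟩⟨b,d⟩ - ⟨a,d⟩⟨b,c⟩ - ψ(a,b,c,d)`. -/
lemma g2_cross_dot_cross (a b c d : E7) :
    dotE (crossE a b) (crossE c d)
      = dotE a c * dotE b d - dotE a d * dotE b c - Psi4 a b c d := by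
  have h1 : dotE (crossE a b) (crossE c d)
      = ∑ p, ∑ q, a p * b q * (∑ k, phi7 p q k * crossE c d k) := by
    have h2 : dotE (crossE a b) (crossE c d)
        = ∑ p, ∑ q, ∑ k, a p * b q * (phi7 p q k * crossE c d k) := by
      simp only [dotE]
      rw [sum_comm3 fun p q k => a p * b q * (phi7 p q k * crossE c d k)]
      refine Finset.sum_congr rfl fun k _ => ?_
      rw [show crossE a b k * crossE c d k
          = ∑ p, ∑ q, a p * b q * (phi7 p q k * crossE c d k) from ?_]
      simp only [crossE, Finset.sum_mul]
      refine Finset.sum_congr rfl fun p _ => ?_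
      exact Finset.sum_congr rfl fun q _ => by ring
    rw [h2]
    exact Finset.sum_congr rfl fun p _ => Finset.sum_congr rfl fun q _ =>
      (Finset.mul_sum _ _ _).symm
  rw [h1]
  calc (∑ p, ∑ q, a p * b q * (∑ k, phi7 p q k * crossE c d k))
      = ∑ p, ∑ q, (a p * c p * (b q * d q) - a p * d p * (b q * c q)
          - ∑ r, ∑ s, a p * b q * c r * d s * psi7 p q r s) := by
        refine Finset.sum_congr rfl fun p _ => Finset.sum_congr rfl fun q _ => ?_
        rw [cross_inner_aux]
        have hps : a p * b q * (∑ r, ∑ s, c r * d s * psi7 p q r s)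
            = ∑ r, ∑ s, a p * b q * c r * d s * psi7 p q r s := by
          rw [Finset.mul_sum]
          exact Finset.sum_congr rfl fun r _ => by
            rw [Finset.mul_sum]; exact Finset.sum_congr rfl fun s _ => by ring
        linear_combination -hps
    _ = dotE a c * dotE b d - dotE a d * dotE b c - Psi4 a b c d := by
        simp only [Finset.sum_sub_distrib, dotE, Psi4]
        rw [Finset.sum_mul_sum (f := fun p => a p * c p) (g := fun q => b q * d q)]
        rw [Finset.sum_mul_sum (f := fun p => a p * d p) (g := fun q => b q * c q)]

/-- `⟨a × b, c⟩ = ⟨a, b × c⟩`. -/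
lemma dot_cross_rot (a b c : E7) : dotE (crossE a b) c = dotE a (crossE b c) := by
  have L : dotE (crossE a b) c = ∑ p, ∑ q, ∑ k, a p * b q * c k * phi7 p q k := by
    simp only [dotE]
    rw [sum_comm3 fun p q k => a p * b q * c k * phi7 p q k]
    refine Finset.sum_congr rfl fun k _ => ?_
    simp only [crossE, Finset.sum_mul]
    refine Finset.sum_congr rfl fun p _ => ?_
    exact Finset.sum_congr rfl fun q _ => by ring
  have R : dotE a (crossE b c) = ∑ p, ∑ q, ∑ k, a p * b q * c k * phi7 q k p := by
    simp only [dotE, crossE, Finset.mul_sum]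
    exact Finset.sum_congr rfl fun p _ => Finset.sum_congr rfl fun q _ =>
      Finset.sum_congr rfl fun k _ => by ring
  rw [L, R]
  exact Finset.sum_congr rfl fun p _ => Finset.sum_congr rfl fun q _ =>
    Finset.sum_congr rfl fun k _ => by rw [phi_cyc]

/-- `X(u,v) = ⟨u, Xv⟩`. -/
lemma Xform_dot (X : Matrix (Fin 7) (Fin 7) ℝ) (a b : E7) :
    Xform X a b = dotE a (mulVecE X b) := by
  simp only [Xform, dotE, mulVecE, Finset.mul_sum]
  exact Finset.sum_congr rfl fun i _ => Finset.sum_congr rfl fun j _ => by ring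

/-- skew-adjointness in dot form. -/
lemma skew_dot (X : Matrix (Fin 7) (Fin 7) ℝ) (hX : ∀ i j, X j i = -X i j) (a b : E7) :
    dotE a (mulVecE X b) = -dotE b (mulVecE X a) := by
  have L : dotE a (mulVecE X b) = ∑ i, ∑ j, a i * (X i j * b j) := by
    simp only [dotE, mulVecE, Finset.mul_sum]
  have R : dotE b (mulVecE X a) = ∑ i, ∑ j, b i * (X i j * a j) := by
    simp only [dotE, mulVecE, Finset.mul_sum]
  rw [L, R, Finset.sum_comm, ← Finset.sum_neg_distrib]
  refine Finset.sum_congr rfl fun i _ => ?_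
  rw [← Finset.sum_neg_distrib]
  refine Finset.sum_congr rfl fun j _ => ?_
  rw [hX i j]; ring

/-! ### ψ evaluated on vectors: symmetries -/

lemma Psi4_swap23 (a b c d : E7) : Psi4 a c b d = -Psi4 a b c d := by
  simp only [Psi4]
  rw [← Finset.sum_neg_distrib]
  refine Finset.sum_congr rfl fun p _ => ?_
  rw [Finset.sum_comm, ← Finset.sum_neg_distrib]
  refine Finset.sum_congr rfl fun q _ => ?_
  rw [← Finset.sum_neg_distrib]
  refine Finset.sum_congr rfl fun r _ => ?_
  rw [← Finset.sum_neg_distrib]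
  refine Finset.sum_congr rfl fun s _ => ?_
  rw [psi_swap23 p r q s]; ring

lemma Psi4_swap24v (a b c d : E7) : Psi4 a d c b = -Psi4 a b c d := by
  have step1 : Psi4 a d c b
      = ∑ p, ∑ q, ∑ r, ∑ s, a p * d s * c r * b q * psi7 p s r q := by
    refine Finset.sum_congr rfl fun p _ => ?_
    rw [sum_comm3 fun q r s => a p * d q * c r * b s * psi7 p q r s]
    refine Finset.sum_congr rfl fun m _ => ?_
    rw [Finset.sum_comm]
  rw [step1]
  simp only [Psi4, ← Finset.sum_neg_distrib]
  refine Finset.sum_congr rfl fun p _ => Finset.sum_congr rfl fun q _ =>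
    Finset.sum_congr rfl fun r _ => Finset.sum_congr rfl fun s _ => ?_
  rw [psi_swap24 p q r s]; ring

lemma Psi4_rep24 (a b c : E7) : Psi4 a b c b = 0 := by
  have h := Psi4_swap24v a b c b
  linarith

/-! ### X is a derivation of the cross product -/

lemma g2_deriv (X : Matrix (Fin 7) (Fin 7) ℝ) (hX : ∀ i j, X j i = -X i j)
    (h14 : IsType14 X) (a b : E7) (k : Fin 7) :
    mulVecE X (crossE a b) k
      = crossE (mulVecE X a) b k + crossE a (mulVecE X b) k := by
  have H : (∑ i, ∑ j, ∑ p, a i * b j *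
      (X i p * phi7 p j k + X j p * phi7 i p k + X k p * phi7 i j p)) = 0 := by
    have h14' : ∀ i j k : Fin 7,
        (∑ p, (X i p * phi7 p j k + X j p * phi7 i p k + X k p * phi7 i j p)) = 0 := h14
    have h0 : ∀ i j : Fin 7, (∑ p, a i * b j *
        (X i p * phi7 p j k + X j p * phi7 i p k + X k p * phi7 i j p))
        = a i * b j * ∑ p, (X i p * phi7 p j k + X j p * phi7 i p k + X k p * phi7 i j p) :=
      fun i j => (Finset.mul_sum _ _ _).symm
    simp only [h0, h14', mul_zero, Finset.sum_const_zero]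
  have split : (∑ i, ∑ j, ∑ p, a i * b j *
      (X i p * phi7 p j k + X j p * phi7 i p k + X k p * phi7 i j p))
      = (∑ i, ∑ j, ∑ p, a i * b j * (X i p * phi7 p j k))
      + (∑ i, ∑ j, ∑ p, a i * b j * (X j p * phi7 i p k))
      + (∑ i, ∑ j, ∑ p, a i * b j * (X k p * phi7 i j p)) := by
    simp only [mul_add, Finset.sum_add_distrib]
  have hma : ∀ p, (∑ i, a i * X i p) = -mulVecE X a p := by
    intro p
    rw [show -mulVecE X a p = ∑ i, -(X p i * a i) from by
      simp [mulVecE, Finset.sum_neg_distrib]]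
    exact Finset.sum_congr rfl fun i _ => by rw [hX p i]; ring
  have hmb : ∀ p, (∑ j, b j * X j p) = -mulVecE X b p := by
    intro p
    rw [show -mulVecE X b p = ∑ j, -(X p j * b j) from by
      simp [mulVecE, Finset.sum_neg_distrib]]
    exact Finset.sum_congr rfl fun j _ => by rw [hX p j]; ring
  have e1 : (∑ i, ∑ j, ∑ p, a i * b j * (X i p * phi7 p j k))
      = -crossE (mulVecE X a) b k := by
    rw [sum_comm3]
    have : ∀ p, (∑ i, ∑ j, a i * b j * (X i p * phi7 p j k))
        = (∑ i, a i * X i p) * (∑ j, b j * phi7 p j k) := by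
      intro p
      rw [Finset.sum_mul_sum]
      exact Finset.sum_congr rfl fun i _ => Finset.sum_congr rfl fun j _ => by ring
    simp only [this, hma]
    rw [show -crossE (mulVecE X a) b k = ∑ p, -(∑ j, mulVecE X a p * b j * phi7 p j k) from by
      simp only [crossE, Finset.sum_neg_distrib]]
    refine Finset.sum_congr rfl fun p _ => ?_
    rw [← Finset.sum_neg_distrib, Finset.mul_sum]
    exact Finset.sum_congr rfl fun j _ => by ring
  have e2 : (∑ i, ∑ j, ∑ p, a i * b j * (X j p * phi7 i p k))
      = -crossE a (mulVecE X b) k := by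
    have step : (∑ i, ∑ j, ∑ p, a i * b j * (X j p * phi7 i p k))
        = ∑ i, ∑ p, a i * (∑ j, b j * X j p) * phi7 i p k := by
      refine Finset.sum_congr rfl fun i _ => ?_
      rw [Finset.sum_comm]
      refine Finset.sum_congr rfl fun p _ => ?_
      rw [Finset.mul_sum, Finset.sum_mul]
      exact Finset.sum_congr rfl fun j _ => by ring
    rw [step]
    simp only [hmb]
    rw [show -crossE a (mulVecE X b) k
        = ∑ i, -(∑ p, a i * mulVecE X b p * phi7 i p k) from by
      simp only [crossE, Finset.sum_neg_distrib]]
    refine Finset.sum_congr rfl fun i _ => ?_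
    rw [← Finset.sum_neg_distrib]
    exact Finset.sum_congr rfl fun p _ => by ring
  have e3 : (∑ i, ∑ j, ∑ p, a i * b j * (X k p * phi7 i j p))
      = mulVecE X (crossE a b) k := by
    rw [sum_comm3]
    rw [show mulVecE X (crossE a b) k
        = ∑ p, X k p * (∑ i, ∑ j, a i * b j * phi7 i j p) from rfl]
    refine Finset.sum_congr rfl fun p _ => ?_
    rw [Finset.mul_sum]
    refine Finset.sum_congr rfl fun i _ => ?_
    rw [Finset.mul_sum]
    exact Finset.sum_congr rfl fun j _ => by ring
  rw [split, e1, e2, e3] at H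
  linarith

/-- Proposition 2.1: for `X ∈ 𝔤₂` and orthogonal `u, v, y`,
`X(u × y, v × y) = |y|² X(u,v) + X(y, (u × v) × y)`. -/
theorem stmt7 (X : Matrix (Fin 7) (Fin 7) ℝ) (hskew : Xᵀ = -X) (h14 : IsType14 X)
    (u v y : E7) (huv : ⟪u, v⟫ = 0) (huy : ⟪u, y⟫ = 0) (hvy : ⟪v, y⟫ = 0) :
    Xform X (crossE u y) (crossE v y)
      = ‖y‖ ^ 2 * Xform X u v + Xform X y (crossE (crossE u v) y) := by
  rw [inner_eq] at huv huy hvy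
  have hX : ∀ i j, X j i = -X i j := by
    intro i j
    have := congrFun (congrFun hskew i) j
    simpa [Matrix.transpose_apply, Matrix.neg_apply] using this
  -- Left-hand side
  have hd := g2_deriv X hX h14 v y
  have lhs_split : Xform X (crossE u y) (crossE v y)
      = dotE (crossE u y) (crossE (mulVecE X v) y)
        + dotE (crossE u y) (crossE v (mulVecE X y)) := by
    rw [Xform_dot]
    simp only [dotE]
    rw [← Finset.sum_add_distrib]
    exact Finset.sum_congr rfl fun k _ => by rw [hd k]; ring
  have t1 : dotE (crossE u y) (crossE (mulVecE X v) y)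
      = Xform X u v * dotE y y := by
    rw [g2_cross_dot_cross, Psi4_rep24, Xform_dot, huy]
    ring
  have t2 : dotE (crossE u y) (crossE v (mulVecE X y))
      = -Psi4 u y v (mulVecE X y) := by
    rw [g2_cross_dot_cross, huv, dotE_comm y v, hvy]
    ring
  -- Right-hand side second term
  have rhs2 : Xform X y (crossE (crossE u v) y) = Psi4 u v y (mulVecE X y) := by
    rw [Xform_dot, skew_dot X hX, dot_cross_rot, g2_cross_dot_cross, huy, hvy]
    ring
  have hswap : Psi4 u y v (mulVecE X y) = -Psi4 u v y (mulVecE X y) := by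
    have := Psi4_swap23 u y v (mulVecE X y)
    linarith
  rw [lhs_split, t1, t2, rhs2, norm_sq_eq, hswap]
  ring

end
end

section
/- Let X be a skew-symmetric 7×7 real matrix of type Λ²₁₄ and let u ∈ E. Then [X, u ⌟ φ] = (X.mulVec u) ⌟ φ, where (X.mulVec u)_p = Σ_k X(p,k) u_k. In particular, the commutator of a matrix of type Λ²₁₄ with a matrix of type Λ²₇ is of type Λ²₇. -/
open scoped BigOperators RealInnerProductSpace Matrix

noncomputable section

/-- `[X, u ⌟ φ] = (X u) ⌟ φ` for `X ∈ Λ²₁₄`; in particular `[Λ²₁₄, Λ²₇] ⊆ Λ²₇`. -/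
theorem stmt8 (X : Matrix (Fin 7) (Fin 7) ℝ) (hskew : Xᵀ = -X) (h14 : IsType14 X)
    (u : E7) :
    X * contractPhi u - contractPhi u * X = contractPhi (mulVecE X u) ∧
    (∀ Y : Matrix (Fin 7) (Fin 7) ℝ, (∃ v : E7, Y = contractPhi v) →
      ∃ w : E7, X * Y - Y * X = contractPhi w) := by
  have hX : ∀ a b : Fin 7, X a b = - X b a := by
    intro a b
    have := congrFun (congrFun hskew b) a
    simpa [Matrix.transpose_apply, Matrix.neg_apply] using this
  have key : ∀ p i j : Fin 7,
      ∑ k, (X i k * phi7 p k j - phi7 p i k * X k j) = ∑ q, X q p * phi7 q i j := by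
    intro p i j
    have h := h14 p i j
    have e1 : ∑ k, (X i k * phi7 p k j - phi7 p i k * X k j)
        = (∑ k, (X p k * phi7 k i j + X i k * phi7 p k j + X j k * phi7 p i k))
          - ∑ k, X p k * phi7 k i j := by
      rw [← Finset.sum_sub_distrib]
      refine Finset.sum_congr rfl fun k _ => ?_
      rw [hX k j]; ring
    rw [e1, h, zero_sub]
    rw [← Finset.sum_neg_distrib]
    refine Finset.sum_congr rfl fun k _ => ?_
    rw [hX k p]; ring
  have main : X * contractPhi u - contractPhi u * X = contractPhi (mulVecE X u) := by
    ext i j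
    have L : (X * contractPhi u - contractPhi u * X) i j
        = ∑ p, u p * ∑ k, (X i k * phi7 p k j - phi7 p i k * X k j) := by
      simp only [Matrix.sub_apply, Matrix.mul_apply, contractPhi, Matrix.of_apply,
        Finset.mul_sum, Finset.sum_mul, ← Finset.sum_sub_distrib]
      rw [Finset.sum_comm]
      exact Finset.sum_congr rfl fun p _ => Finset.sum_congr rfl fun k _ => by ring
    have R : contractPhi (mulVecE X u) i j
        = ∑ p, u p * ∑ q, X q p * phi7 q i j := by
      simp only [contractPhi, Matrix.of_apply, mulVecE, PiLp.toLp_apply, Finset.sum_mul]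
      rw [Finset.sum_comm]
      refine Finset.sum_congr rfl fun p _ => ?_
      rw [Finset.mul_sum]
      refine Finset.sum_congr rfl fun q _ => ?_
      ring
    rw [L, R]
    exact Finset.sum_congr rfl fun p _ => by rw [key]
  refine ⟨main, ?_⟩
  rintro Y ⟨v, rfl⟩
  exact ⟨mulVecE X v, by
    have hX2 : Xᵀ = -X := hskew
    -- reuse the same proof with u := v
    have : X * contractPhi v - contractPhi v * X = contractPhi (mulVecE X v) := by
      ext i j
      have L : (X * contractPhi v - contractPhi v * X) i j
          = ∑ p, v p * ∑ k, (X i k * phi7 p k j - phi7 p i k * X k j) := by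
        simp only [Matrix.sub_apply, Matrix.mul_apply, contractPhi, Matrix.of_apply,
          Finset.mul_sum, Finset.sum_mul, ← Finset.sum_sub_distrib]
        rw [Finset.sum_comm]
        exact Finset.sum_congr rfl fun p _ => Finset.sum_congr rfl fun k _ => by ring
      have R : contractPhi (mulVecE X v) i j
          = ∑ p, v p * ∑ q, X q p * phi7 q i j := by
        simp only [contractPhi, Matrix.of_apply, mulVecE, PiLp.toLp_apply, Finset.sum_mul]
        rw [Finset.sum_comm]
        refine Finset.sum_congr rfl fun p _ => ?_
        rw [Finset.mul_sum]
        refine Finset.sum_congr rfl fun q _ => ?_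
        ring
      rw [L, R]
      exact Finset.sum_congr rfl fun p _ => by rw [key]
    exact this⟩


end
end

section
/- Let u, v, w ∈ E be pairwise orthogonal. Then (u × w) × (v × w) = 2 φ(u,v,w) w - ‖w‖² (u × v), where φ(u,v,w) = Σ_{i,j,k} u_i v_j w_k φ(i,j,k) = ⟪u × v, w⟫. -/
open scoped BigOperators RealInnerProductSpace Matrix

noncomputable section

/-- `φ(u,v,w)` as a scalar. -/
def phi3 (u v w : E7) : ℝ := ∑ i, ∑ j, ∑ k, u i * v j * w k * phi7 i j k

lemma crossE_c0 (a b : E7) : crossE a b 0 = a 6 * b 5 - a 5 * b 6 - a 4 * b 3 + a 3 * b 4 - a 2 * b 1 + a 1 * b 2 := by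
  simp [crossE, phi7, tripleForm, kd, Fin.sum_univ_seven]; ring

lemma crossE_c1 (a b : E7) : crossE a b 1 = -a 6 * b 4 - a 5 * b 3 + a 4 * b 6 + a 3 * b 5 + a 2 * b 0 - a 0 * b 2 := by
  simp [crossE, phi7, tripleForm, kd, Fin.sum_univ_seven]; ring

lemma crossE_c2 (a b : E7) : crossE a b 2 = -a 6 * b 3 + a 5 * b 4 - a 4 * b 5 + a 3 * b 6 - a 1 * b 0 + a 0 * b 1 := by
  simp [crossE, phi7, tripleForm, kd, Fin.sum_univ_seven]; ring

lemma crossE_c3 (a b : E7) : crossE a b 3 = a 6 * b 2 + a 5 * b 1 + a 4 * b 0 - a 2 * b 6 - a 1 * b 5 - a 0 * b 4 := by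
  simp [crossE, phi7, tripleForm, kd, Fin.sum_univ_seven]; ring

lemma crossE_c4 (a b : E7) : crossE a b 4 = a 6 * b 1 - a 5 * b 2 - a 3 * b 0 + a 2 * b 5 - a 1 * b 6 + a 0 * b 3 := by
  simp [crossE, phi7, tripleForm, kd, Fin.sum_univ_seven]; ring

lemma crossE_c5 (a b : E7) : crossE a b 5 = -a 6 * b 0 + a 4 * b 2 - a 3 * b 1 - a 2 * b 4 + a 1 * b 3 + a 0 * b 6 := by
  simp [crossE, phi7, tripleForm, kd, Fin.sum_univ_seven]; ring

lemma crossE_c6 (a b : E7) : crossE a b 6 = a 5 * b 0 - a 4 * b 1 - a 3 * b 2 + a 2 * b 3 + a 1 * b 4 - a 0 * b 5 := by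
  simp [crossE, phi7, tripleForm, kd, Fin.sum_univ_seven]; ring

lemma phi3_eq (u v w : E7) : phi3 u v w = u 6 * v 5 * w 0 - u 6 * v 4 * w 1 - u 6 * v 3 * w 2 + u 6 * v 2 * w 3 + u 6 * v 1 * w 4 - u 6 * v 0 * w 5 - u 5 * v 6 * w 0 + u 5 * v 4 * w 2 - u 5 * v 3 * w 1 - u 5 * v 2 * w 4 + u 5 * v 1 * w 3 + u 5 * v 0 * w 6 + u 4 * v 6 * w 1 - u 4 * v 5 * w 2 - u 4 * v 3 * w 0 + u 4 * v 2 * w 5 - u 4 * v 1 * w 6 + u 4 * v 0 * w 3 + u 3 * v 6 * w 2 + u 3 * v 5 * w 1 + u 3 * v 4 * w 0 - u 3 * v 2 * w 6 - u 3 * v 1 * w 5 - u 3 * v 0 * w 4 - u 2 * v 6 * w 3 + u 2 * v 5 * w 4 - u 2 * v 4 * w 5 + u 2 * v 3 * w 6 - u 2 * v 1 * w 0 + u 2 * v 0 * w 1 - u 1 * v 6 * w 4 - u 1 * v 5 * w 3 + u 1 * v 4 * w 6 + u 1 * v 3 * w 5 + u 1 * v 2 * w 0 - u 1 * v 0 *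 w 2 + u 0 * v 6 * w 5 - u 0 * v 5 * w 6 - u 0 * v 4 * w 3 + u 0 * v 3 * w 4 - u 0 * v 2 * w 1 + u 0 * v 1 * w 2 := by
  simp [phi3, phi7, tripleForm, kd, Fin.sum_univ_seven]; ring


set_option maxHeartbeats 2000000 in
/-- Identity (4.10): for orthogonal `u, v, w`,
`(u × w) × (v × w) = 2 φ(u,v,w) w - |w|² (u × v)`. -/
theorem stmt12 (u v w : E7) (huv : ⟪u, v⟫ = 0) (huw : ⟪u, w⟫ = 0)
    (hvw : ⟪v, w⟫ = 0) :
    crossE (crossE u w) (crossE v w)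
      = (2 * phi3 u v w) • w - (‖w‖ ^ 2) • crossE u v := by
  have h2 : u 0 * w 0 + u 1 * w 1 + u 2 * w 2 + u 3 * w 3 + u 4 * w 4 + u 5 * w 5 + u 6 * w 6 = 0 := by
    have h := huw
    simp [PiLp.inner_apply, RCLike.inner_apply, Fin.sum_univ_seven] at h
    linarith
  have h3 : v 0 * w 0 + v 1 * w 1 + v 2 * w 2 + v 3 * w 3 + v 4 * w 4 + v 5 * w 5 + v 6 * w 6 = 0 := by
    have h := hvw
    simp [PiLp.inner_apply, RCLike.inner_apply, Fin.sum_univ_seven] at h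
    linarith
  have hw : ‖w‖ ^ 2 = w 0 * w 0 + w 1 * w 1 + w 2 * w 2 + w 3 * w 3 + w 4 * w 4 + w 5 * w 5 + w 6 * w 6 := by
    rw [EuclideanSpace.norm_eq, Real.sq_sqrt (by positivity)]
    simp only [Real.norm_eq_abs, sq_abs, Fin.sum_univ_seven]; ring
  have hpt : ∀ j : Fin 7, ((2 * phi3 u v w) • w - (‖w‖ ^ 2) • crossE u v) j
      = 2 * phi3 u v w * w j - ‖w‖ ^ 2 * crossE u v j := fun _ => rfl
  have e0 : crossE (crossE u w) (crossE v w) 0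
      = 2 * phi3 u v w * w 0 - ‖w‖ ^ 2 * crossE u v 0 := by
    rw [phi3_eq, hw]
    simp only [crossE_c0, crossE_c1, crossE_c2, crossE_c3, crossE_c4, crossE_c5, crossE_c6]
    linear_combination (u 6 * w 5 - u 5 * w 6 - u 4 * w 3 + u 3 * w 4 - u 2 * w 1 + u 1 * w 2) * h3 + (-v 6 * w 5 + v 5 * w 6 + v 4 * w 3 - v 3 * w 4 + v 2 * w 1 - v 1 * w 2) * h2
  have e1 : crossE (crossE u w) (crossE v w) 1
      = 2 * phi3 u v w * w 1 - ‖w‖ ^ 2 * crossE u v 1 := by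
    rw [phi3_eq, hw]
    simp only [crossE_c0, crossE_c1, crossE_c2, crossE_c3, crossE_c4, crossE_c5, crossE_c6]
    linear_combination (-u 6 * w 4 - u 5 * w 3 + u 4 * w 6 + u 3 * w 5 + u 2 * w 0 - u 0 * w 2) * h3 + (v 6 * w 4 + v 5 * w 3 - v 4 * w 6 - v 3 * w 5 - v 2 * w 0 + v 0 * w 2) * h2
  have e2 : crossE (crossE u w) (crossE v w) 2
      = 2 * phi3 u v w * w 2 - ‖w‖ ^ 2 * crossE u v 2 := by
    rw [phi3_eq, hw]
    simp only [crossE_c0, crossE_c1, crossE_c2, crossE_c3, crossE_c4, crossE_c5, crossE_c6]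
    linear_combination (-u 6 * w 3 + u 5 * w 4 - u 4 * w 5 + u 3 * w 6 - u 1 * w 0 + u 0 * w 1) * h3 + (v 6 * w 3 - v 5 * w 4 + v 4 * w 5 - v 3 * w 6 + v 1 * w 0 - v 0 * w 1) * h2
  have e3 : crossE (crossE u w) (crossE v w) 3
      = 2 * phi3 u v w * w 3 - ‖w‖ ^ 2 * crossE u v 3 := by
    rw [phi3_eq, hw]
    simp only [crossE_c0, crossE_c1, crossE_c2, crossE_c3, crossE_c4, crossE_c5, crossE_c6]
    linear_combination (u 6 * w 2 + u 5 * w 1 + u 4 * w 0 - u 2 * w 6 - u 1 * w 5 - u 0 * w 4) * h3 + (-v 6 * w 2 - v 5 * w 1 - v 4 * w 0 + v 2 * w 6 + v 1 * w 5 + v 0 * w 4) * h2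
  have e4 : crossE (crossE u w) (crossE v w) 4
      = 2 * phi3 u v w * w 4 - ‖w‖ ^ 2 * crossE u v 4 := by
    rw [phi3_eq, hw]
    simp only [crossE_c0, crossE_c1, crossE_c2, crossE_c3, crossE_c4, crossE_c5, crossE_c6]
    linear_combination (u 6 * w 1 - u 5 * w 2 - u 3 * w 0 + u 2 * w 5 - u 1 * w 6 + u 0 * w 3) * h3 + (-v 6 * w 1 + v 5 * w 2 + v 3 * w 0 - v 2 * w 5 + v 1 * w 6 - v 0 * w 3) * h2
  have e5 : crossE (crossE u w) (crossE v w) 5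
      = 2 * phi3 u v w * w 5 - ‖w‖ ^ 2 * crossE u v 5 := by
    rw [phi3_eq, hw]
    simp only [crossE_c0, crossE_c1, crossE_c2, crossE_c3, crossE_c4, crossE_c5, crossE_c6]
    linear_combination (-u 6 * w 0 + u 4 * w 2 - u 3 * w 1 - u 2 * w 4 + u 1 * w 3 + u 0 * w 6) * h3 + (v 6 * w 0 - v 4 * w 2 + v 3 * w 1 + v 2 * w 4 - v 1 * w 3 - v 0 * w 6) * h2
  have e6 : crossE (crossE u w) (crossE v w) 6
      = 2 * phi3 u v w * w 6 - ‖w‖ ^ 2 * crossE u v 6 := by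
    rw [phi3_eq, hw]
    simp only [crossE_c0, crossE_c1, crossE_c2, crossE_c3, crossE_c4, crossE_c5, crossE_c6]
    linear_combination (u 5 * w 0 - u 4 * w 1 - u 3 * w 2 + u 2 * w 3 + u 1 * w 4 - u 0 * w 5) * h3 + (-v 5 * w 0 + v 4 * w 1 + v 3 * w 2 - v 2 * w 3 - v 1 * w 4 + v 0 * w 5) * h2
  ext k
  fin_cases k
  · exact e0.trans (hpt 0).symm
  · exact e1.trans (hpt 1).symm
  · exact e2.trans (hpt 2).symm
  · exact e3.trans (hpt 3).symm
  · exact e4.trans (hpt 4).symm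
  · exact e5.trans (hpt 5).symm
  · exact e6.trans (hpt 6).symm

end
end
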